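/- arXiv:2507.11111 — 5 statements merged into one kernel-verified Lean document; each statement's English description precedes it below -/
import Mathlib

section
/- Let g₀ be a smooth metric on U and let φ : U × [0,T] → ℝ be smooth with φ(·,0) = 0, such that for each t the matrix g(x,t) := g₀(x) − t·β(g₀)(x) + D²_x φ(x,t) is positive definite and ∂_t φ(x,t) = log( det g(x,t) / det g₀(x) ). Then g(x,t) is a solution of the geometric flow: ∂_t g_{ij}(x,t) = ∂_i∂_j log det g(x,t) for all (x,t) ∈ U × [0,T], and g(·,0) = g₀. In other words, any solution of the parabolic Monge–Ampère equation produces a solution of the flow. -/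
open Set Matrix

/-- Partial derivative in the `i`-th coordinate direction of a function on `ℝⁿ`. -/
noncomputable def pd (n : ℕ) (i : Fin n) (f : (Fin n → ℝ) → ℝ) (x : Fin n → ℝ) : ℝ :=
  fderiv ℝ f x (Pi.single i 1)

/-- any solution `φ` of the parabolic Monge–Ampère equation
`∂_t φ = log (det (g₀ - t β(g₀) + D²ₓφ) / det g₀)`, `φ(·,0)=0`, with
`g(x,t) := g₀(x) - t β(g₀)(x) + D²ₓφ(x,t)` positive definite, produces a solution
of the geometric flow `∂_t g_{ij} = ∂_i∂_j log det g` with `g(·,0) = g₀`. -/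
theorem stmt1
    (n : ℕ) (hn : 1 ≤ n) (U : Set (Fin n → ℝ)) (hU : IsOpen U) (hUne : U.Nonempty)
    (T : ℝ) (hT : 0 < T)
    -- `g₀` is a smooth metric on `U`
    (g₀ : (Fin n → ℝ) → Matrix (Fin n) (Fin n) ℝ)
    (hg₀smooth : ∀ i j : Fin n, ContDiffOn ℝ (⊤ : ℕ∞) (fun x => g₀ x i j) U)
    (hg₀pos : ∀ x ∈ U, (g₀ x).PosDef)
    -- `β(g₀)_{ij} = -∂_i∂_j log det g₀`
    (β₀ : Fin n → Fin n → (Fin n → ℝ) → ℝ)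
    (hβ : ∀ i j x, β₀ i j x = -(pd n i (pd n j (fun y => Real.log (g₀ y).det)) x))
    -- `φ` is smooth on `U × [0,T]` with `φ(·,0) = 0`
    (φ : (Fin n → ℝ) → ℝ → ℝ)
    (hφsmooth : ContDiffOn ℝ (⊤ : ℕ∞) (fun p : (Fin n → ℝ) × ℝ => φ p.1 p.2) (U ×ˢ Icc 0 T))
    (hφ0 : ∀ x ∈ U, φ x 0 = 0)
    -- `g(x,t) := g₀(x) - t β(g₀)(x) + D²ₓφ(x,t)`
    (g : ℝ → (Fin n → ℝ) → Matrix (Fin n) (Fin n) ℝ)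
    (hg : ∀ t x, g t x = Matrix.of (fun i j : Fin n =>
      g₀ x i j - t * β₀ i j x + pd n i (pd n j (fun y => φ y t)) x))
    -- `g(x,t)` is positive definite
    (hpos : ∀ t ∈ Icc (0:ℝ) T, ∀ x ∈ U, (g t x).PosDef)
    -- `∂_t φ(x,t) = log (det g(x,t) / det g₀(x))`
    (hMA : ∀ x ∈ U, ∀ t ∈ Icc (0:ℝ) T,
      HasDerivWithinAt (fun s => φ x s) (Real.log ((g t x).det / (g₀ x).det)) (Icc 0 T) t) :
    -- then `g` solves the geometric flow `∂_t g_{ij}(x,t) = ∂_i∂_j log det g(x,t)`...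
    (∀ x ∈ U, ∀ t ∈ Icc (0:ℝ) T, ∀ i j : Fin n,
      HasDerivWithinAt (fun s => g s x i j)
        (pd n i (pd n j (fun y => Real.log (g t y).det)) x) (Icc 0 T) t)
    ∧
    -- ...with initial value `g(·,0) = g₀`
    (∀ x ∈ U, g 0 x = g₀ x) := by
  have hone : ((⊤ : ℕ∞) : WithTop ℕ∞) ≠ 0 := by simp
  have htwo : (2 : WithTop ℕ∞) ≤ ((⊤ : ℕ∞) : WithTop ℕ∞) :=
    mod_cast ENat.natCast_le_of_coe_top_le_withTop le_rfl 2
  set S : Set ((Fin n → ℝ) × ℝ) := U ×ˢ Icc 0 T with hSdef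
  have hSu : UniqueDiffOn ℝ S := hU.uniqueDiffOn.prod (uniqueDiffOn_Icc hT)
  have hScl : ∀ p ∈ S, p ∈ closure (interior S) := by
    intro p hp
    have : interior S = U ×ˢ Ioo 0 T := by
      rw [hSdef, interior_prod_eq, hU.interior_eq, interior_Icc]
    rw [this, closure_prod_eq, closure_Ioo hT.ne]
    exact ⟨subset_closure hp.1, hp.2⟩
  set F : ((Fin n → ℝ) × ℝ) → ℝ := fun p => φ p.1 p.2 with hFdef
  have hFs : ContDiffOn ℝ (⊤ : ℕ∞) F S := hφsmooth
  set G1 := fderivWithin ℝ F S with hG1def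
  have hG1s : ContDiffOn ℝ (⊤ : ℕ∞) G1 S :=
    hFs.fderivWithin hSu (by exact_mod_cast le_top)
  -- generic facts
  have hdiffW : ∀ (h : ((Fin n → ℝ) × ℝ) → ℝ), ContDiffOn ℝ (⊤ : ℕ∞) h S →
      ∀ p ∈ S, HasFDerivWithinAt h (fderivWithin ℝ h S p) S p := fun h hh p hp =>
    ((hh.differentiableOn hone) p hp).hasFDerivWithinAt
  -- slicing in space at fixed time
  have hslice : ∀ (h : ((Fin n → ℝ) × ℝ) → ℝ) (z : Fin n → ℝ) (s : ℝ), z ∈ U → s ∈ Icc 0 T →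
      DifferentiableWithinAt ℝ h S (z, s) →
      DifferentiableAt ℝ (fun y => h (y, s)) z ∧
        ∀ v : Fin n → ℝ, fderiv ℝ (fun y => h (y, s)) z v = fderivWithin ℝ h S (z, s) (v, 0) := by
    intro h z s hz hs hD
    have hmap : MapsTo (fun y : Fin n → ℝ => (y, s)) U S := fun y hy => ⟨hy, hs⟩
    have hL : HasFDerivAt (fun y : Fin n → ℝ => (y, s))
        ((ContinuousLinearMap.id ℝ (Fin n → ℝ)).prod 0) z := by
      exact (hasFDerivAt_id z).prodMk (hasFDerivAt_const s z)
    have hcomp : HasFDerivWithinAt (fun y => h (y, s))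
        ((fderivWithin ℝ h S (z, s)).comp ((ContinuousLinearMap.id ℝ (Fin n → ℝ)).prod 0)) U z :=
      HasFDerivWithinAt.comp z hD.hasFDerivWithinAt hL.hasFDerivWithinAt hmap
    have hAt := hcomp.hasFDerivAt (hU.mem_nhds hz)
    refine ⟨hAt.differentiableAt, fun v => ?_⟩
    rw [hAt.fderiv]
    simp
  -- time-curve at fixed space point
  have hcurve : ∀ (h : ((Fin n → ℝ) × ℝ) → ℝ) (z : Fin n → ℝ) (s : ℝ), z ∈ U → s ∈ Icc 0 T →
      DifferentiableWithinAt ℝ h S (z, s) →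
      HasDerivWithinAt (fun u => h (z, u)) (fderivWithin ℝ h S (z, s) (0, 1)) (Icc 0 T) s := by
    intro h z s hz hs hD
    have hmap : MapsTo (fun u : ℝ => ((z, u) : (Fin n → ℝ) × ℝ)) (Icc 0 T) S :=
      fun u hu => ⟨hz, hu⟩
    have hc : HasDerivWithinAt (fun u : ℝ => ((z, u) : (Fin n → ℝ) × ℝ))
        (((0 : Fin n → ℝ), (1 : ℝ))) (Icc 0 T) s :=
      (hasDerivWithinAt_const s _ z).prodMk (hasDerivWithinAt_id s _)
    exact HasFDerivWithinAt.comp_hasDerivWithinAt s hD.hasFDerivWithinAt hc hmap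
  -- the second `fderivWithin` of a clm-applied derivative
  have hswap : ∀ (h : ((Fin n → ℝ) × ℝ) → ℝ), ContDiffOn ℝ (⊤ : ℕ∞) h S →
      ∀ p ∈ S, ∀ v w : (Fin n → ℝ) × ℝ,
      fderivWithin ℝ (fun q => fderivWithin ℝ h S q v) S p w =
        fderivWithin ℝ (fun q => fderivWithin ℝ h S q w) S p v := by
    intro h hh p hp v w
    have hDh : ContDiffOn ℝ (⊤ : ℕ∞) (fderivWithin ℝ h S) S :=
      hh.fderivWithin hSu (by exact_mod_cast le_top)
    have hsym : IsSymmSndFDerivWithinAt ℝ h S p :=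
      (hh p hp).isSymmSndFDerivWithinAt
        (by rw [minSmoothness_of_isRCLikeNormedField]; exact mod_cast ENat.natCast_le_of_coe_top_le_withTop le_rfl 2) hSu (hScl p hp) hp
    have key : ∀ u : (Fin n → ℝ) × ℝ,
        fderivWithin ℝ (fun q => fderivWithin ℝ h S q u) S p =
          (fderivWithin ℝ (fderivWithin ℝ h S) S p).flip u := by
      intro u
      have := fderivWithin_clm_apply (𝕜 := ℝ) (hSu p hp)
        ((hDh.differentiableOn hone) p hp)
        (differentiableWithinAt_const u)
      simpa [fderivWithin_const_apply u] using this
    rw [key v, key w]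
    simp only [ContinuousLinearMap.flip_apply]
    exact hsym w v
  -- the initial condition claim, and vanishing of space-Hessian of φ(·,0)
  have hinit : ∀ x ∈ U, g 0 x = g₀ x := by
    intro x hx
    have hpdzero : ∀ z ∈ U, ∀ j : Fin n, pd n j (fun y => φ y 0) z = 0 := by
      intro z hz j
      have : (fun y => φ y 0) =ᶠ[nhds z] fun _ => (0 : ℝ) := by
        filter_upwards [hU.mem_nhds hz] with y hy using hφ0 y hy
      unfold pd
      rw [this.fderiv_eq]
      simp
    have hpd2zero : ∀ i j : Fin n, pd n i (pd n j (fun y => φ y 0)) x = 0 := by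
      intro i j
      have heqq : (pd n j (fun y => φ y 0)) =ᶠ[nhds x] fun _ => (0 : ℝ) := by
        filter_upwards [hU.mem_nhds hx] with z hz using hpdzero z hz j
      have h2 : fderiv ℝ (pd n j fun y => φ y 0) x = fderiv ℝ (fun _ : Fin n → ℝ => (0:ℝ)) x :=
        heqq.fderiv_eq
      show (fderiv ℝ (pd n j fun y => φ y 0) x) (Pi.single i 1) = 0
      rw [h2]
      simp
    rw [hg 0 x]
    ext i j
    simp [hpd2zero i j]
  refine ⟨?_, hinit⟩
  intro x hx t ht i j
  have hpS : ((x, t) : (Fin n → ℝ) × ℝ) ∈ S := ⟨hx, ht⟩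
  -- directions
  set vi : (Fin n → ℝ) × ℝ := (Pi.single i 1, 0) with hvi
  set vj : (Fin n → ℝ) × ℝ := (Pi.single j 1, 0) with hvj
  set vt : (Fin n → ℝ) × ℝ := (0, 1) with hvt
  -- iterated derivatives
  set Fj : ((Fin n → ℝ) × ℝ) → ℝ := fun q => G1 q vj with hFjdef
  set Ft : ((Fin n → ℝ) × ℝ) → ℝ := fun q => G1 q vt with hFtdef
  have hFjs : ContDiffOn ℝ (⊤ : ℕ∞) Fj S := hG1s.clm_apply contDiffOn_const
  have hFts : ContDiffOn ℝ (⊤ : ℕ∞) Ft S := hG1s.clm_apply contDiffOn_const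
  set G2j := fderivWithin ℝ Fj S with hG2jdef
  set G2t := fderivWithin ℝ Ft S with hG2tdef
  have hG2js : ContDiffOn ℝ (⊤ : ℕ∞) G2j S :=
    hFjs.fderivWithin hSu (by exact_mod_cast le_top)
  have hG2ts : ContDiffOn ℝ (⊤ : ℕ∞) G2t S :=
    hFts.fderivWithin hSu (by exact_mod_cast le_top)
  set Fij : ((Fin n → ℝ) × ℝ) → ℝ := fun q => G2j q vi with hFijdef
  set Fjt : ((Fin n → ℝ) × ℝ) → ℝ := fun q => G2t q vj with hFjtdef
  have hFijs : ContDiffOn ℝ (⊤ : ℕ∞) Fij S := hG2js.clm_apply contDiffOn_const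
  have hFjts : ContDiffOn ℝ (⊤ : ℕ∞) Fjt S := hG2ts.clm_apply contDiffOn_const
  -- swap 1 : G2j q vt = G2t q vj on S
  have hsym1 : ∀ q ∈ S, G2j q vt = G2t q vj := by
    intro q hq
    exact hswap F hFs q hq vj vt
  -- swap 2 : (d/dt within) Fij = (d_i within) Fjt at (x,t)
  have hsym2 : fderivWithin ℝ Fij S (x, t) vt = fderivWithin ℝ Fjt S (x, t) vi := by
    have h1 : fderivWithin ℝ Fij S (x, t) vt =
        fderivWithin ℝ (fun q => G2j q vt) S (x, t) vi := hswap Fj hFjs (x, t) hpS vi vt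
    have h2 : fderivWithin ℝ (fun q => G2j q vt) S (x, t) =
        fderivWithin ℝ Fjt S (x, t) :=
      fderivWithin_congr' (fun q hq => hsym1 q hq) hpS
    rw [h1, h2]
  -- the time derivative of φ is Ft on S
  have hFtψ : ∀ z ∈ U, ∀ s ∈ Icc (0:ℝ) T,
      Ft (z, s) = Real.log ((g s z).det / (g₀ z).det) := by
    intro z hz s hs
    have h1 : HasDerivWithinAt (fun u => φ z u) (G1 (z, s) vt) (Icc 0 T) s :=
      hcurve F z s hz hs ((hFs.differentiableOn hone) (z, s) ⟨hz, hs⟩)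
    have h2 := hMA z hz s hs
    have hu : UniqueDiffWithinAt ℝ (Icc (0:ℝ) T) s := uniqueDiffOn_Icc hT s hs
    have e1 := h1.derivWithin hu
    have e2 := h2.derivWithin hu
    show G1 (z, s) vt = Real.log ((g s z).det / (g₀ z).det)
    rw [← e1, e2]
  -- the space Hessian of φ(·,s) is Fij (·,s)
  have hHess : ∀ s ∈ Icc (0:ℝ) T,
      pd n i (pd n j (fun y => φ y s)) x = Fij (x, s) := by
    intro s hs
    have hinner : ∀ z ∈ U, pd n j (fun y => φ y s) z = Fj (z, s) := by
      intro z hz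
      have := (hslice F z s hz hs ((hFs.differentiableOn hone) (z, s) ⟨hz, hs⟩)).2 (Pi.single j 1)
      unfold pd
      exact this
    have heq : (pd n j (fun y => φ y s)) =ᶠ[nhds x] fun z => Fj (z, s) := by
      filter_upwards [hU.mem_nhds hx] with z hz using hinner z hz
    have houter : fderiv ℝ (pd n j fun y => φ y s) x = fderiv ℝ (fun z => Fj (z, s)) x :=
      heq.fderiv_eq
    show (fderiv ℝ (pd n j fun y => φ y s) x) (Pi.single i 1) = Fij (x, s)
    rw [houter]
    exact (hslice Fj x s hx hs ((hFjs.differentiableOn hone) (x, s) ⟨hx, hs⟩)).2 (Pi.single i 1)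
  -- smoothness of log det g₀
  have hdet0 : ContDiffOn ℝ (⊤ : ℕ∞) (fun y => (g₀ y).det) U := by
    have : (fun y => (g₀ y).det) =
        fun y => ∑ σ : Equiv.Perm (Fin n), (Equiv.Perm.sign σ : ℤ) *
          ∏ k, g₀ y (σ k) k := by
      funext y
      rw [Matrix.det_apply']
    rw [this]
    exact ContDiffOn.sum fun σ _ =>
      (contDiffOn_const.mul (contDiffOn_prod fun k _ => hg₀smooth (σ k) k))
  have hℓ0 : ContDiffOn ℝ (⊤ : ℕ∞) (fun y => Real.log (g₀ y).det) U :=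
    hdet0.log fun y hy => (hg₀pos y hy).det_pos.ne'
  have hpdℓ : ContDiffOn ℝ (⊤ : ℕ∞) (pd n j (fun y => Real.log (g₀ y).det)) U := by
    have h1 : ContDiffOn ℝ (⊤ : ℕ∞) (fderiv ℝ (fun y => Real.log (g₀ y).det)) U :=
      hℓ0.fderiv_of_isOpen hU (by exact_mod_cast le_top)
    exact h1.clm_apply contDiffOn_const
  have hpdℓdiff : DifferentiableAt ℝ (pd n j (fun y => Real.log (g₀ y).det)) x :=
    ((hpdℓ.differentiableOn hone) x hx).differentiableAt (hU.mem_nhds hx)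
  -- the target second space-derivative of log det g(·,t)
  have htarget : pd n i (pd n j (fun y => Real.log (g t y).det)) x =
      fderivWithin ℝ Fjt S (x, t) vi + pd n i (pd n j (fun y => Real.log (g₀ y).det)) x := by
    have hinner : ∀ z ∈ U, pd n j (fun y => Real.log (g t y).det) z =
        Fjt (z, t) + pd n j (fun y => Real.log (g₀ y).det) z := by
      intro z hz
      have heq : (fun y => Real.log (g t y).det) =ᶠ[nhds z]
          fun y => Ft (y, t) + Real.log (g₀ y).det := by
        filter_upwards [hU.mem_nhds hz] with y hy
        rw [hFtψ y hy t ht,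
          Real.log_div (hpos t ht y hy).det_pos.ne' (hg₀pos y hy).det_pos.ne']
        ring
      have hd1 : DifferentiableAt ℝ (fun y => Ft (y, t)) z :=
        (hslice Ft z t hz ht ((hFts.differentiableOn hone) (z, t) ⟨hz, ht⟩)).1
      have hd2 : DifferentiableAt ℝ (fun y => Real.log (g₀ y).det) z :=
        ((hℓ0.differentiableOn hone) z hz).differentiableAt (hU.mem_nhds hz)
      unfold pd
      rw [heq.fderiv_eq, fderiv_fun_add hd1 hd2]
      simp only [ContinuousLinearMap.add_apply]
      congr 1
      exact (hslice Ft z t hz ht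
        ((hFts.differentiableOn hone) (z, t) ⟨hz, ht⟩)).2 (Pi.single j 1)
    have heq2 : (pd n j (fun y => Real.log (g t y).det)) =ᶠ[nhds x]
        fun z => Fjt (z, t) + pd n j (fun y => Real.log (g₀ y).det) z := by
      filter_upwards [hU.mem_nhds hx] with z hz using hinner z hz
    have hd1 : DifferentiableAt ℝ (fun z => Fjt (z, t)) x :=
      (hslice Fjt x t hx ht ((hFjts.differentiableOn hone) (x, t) ⟨hx, ht⟩)).1
    have houter : fderiv ℝ (pd n j fun y => Real.log (g t y).det) x =
        fderiv ℝ (fun z => Fjt (z, t) + pd n j (fun y => Real.log (g₀ y).det) z) x :=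
      heq2.fderiv_eq
    show (fderiv ℝ (pd n j fun y => Real.log (g t y).det) x) (Pi.single i 1) = _
    rw [houter, fderiv_fun_add hd1 hpdℓdiff]
    simp only [ContinuousLinearMap.add_apply]
    congr 1
    exact (hslice Fjt x t hx ht
      ((hFjts.differentiableOn hone) (x, t) ⟨hx, ht⟩)).2 (Pi.single i 1)
  -- time derivative of Fij(x, ·)
  have hdt : HasDerivWithinAt (fun s => Fij (x, s)) (fderivWithin ℝ Fij S (x, t) vt)
      (Icc 0 T) t := by
    have := hcurve Fij x t hx ht ((hFijs.differentiableOn hone) (x, t) hpS)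
    exact this
  -- assemble
  have hmain : HasDerivWithinAt (fun s => g s x i j)
      (0 - 1 * β₀ i j x + fderivWithin ℝ Fij S (x, t) vt) (Icc 0 T) t := by
    have hbase : HasDerivWithinAt
        (fun s => g₀ x i j - s * β₀ i j x + Fij (x, s))
        (0 - 1 * β₀ i j x + fderivWithin ℝ Fij S (x, t) vt) (Icc 0 T) t :=
      (((hasDerivWithinAt_const t _ (g₀ x i j)).sub
        ((hasDerivWithinAt_id t (Icc 0 T)).mul_const (β₀ i j x)))).add hdt
    refine hbase.congr ?_ ?_
    · intro s hs
      rw [hg s x]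
      simp only [Matrix.of_apply]
      rw [hHess s hs]
    · rw [hg t x]
      simp only [Matrix.of_apply]
      rw [hHess t ht]
  have hfinal : 0 - 1 * β₀ i j x + fderivWithin ℝ Fij S (x, t) vt =
      pd n i (pd n j (fun y => Real.log (g t y).det)) x := by
    rw [htarget, hsym2, hβ i j x]
    ring
  rw [← hfinal]
  exact hmain
end

section
/- Let U ⊆ ℝⁿ be a nonempty open convex set and let g : U → (symmetric n×n real matrices) be a smooth map whose entries satisfy the Codazzi symmetry ∂_k g_{ij} = ∂_i g_{kj} on U for all indices i,j,k. Then there exists a smooth function φ : U → ℝ such that g_{ij} = ∂_i∂_j φ on U for all i,j. (This is the local characterization of Hessian metrics on an affine manifold: condition (3) of Proposition 2.3 implies g = ∇dφ locally.) -/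
open Set Matrix

open Metric intervalIntegral MeasureTheory in
lemma poincare {n : ℕ} {U : Set (Fin n → ℝ)} (hU : IsOpen U) (hconv : Convex ℝ U)
    {c : Fin n → ℝ} (hc : c ∈ U) (F : (Fin n → ℝ) → ((Fin n → ℝ) →L[ℝ] ℝ))
    (hF : ContDiffOn ℝ (⊤ : ℕ∞) F U)
    (hsym : ∀ x ∈ U, ∀ v w, fderiv ℝ F x v w = fderiv ℝ F x w v) :
    ∃ φ : (Fin n → ℝ) → ℝ, ContDiffOn ℝ (⊤ : ℕ∞) φ U ∧
      ∀ x ∈ U, HasFDerivAt φ (F x) x := by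
  classical
  have hFc : ContinuousOn F U := hF.continuousOn
  have hF'c : ContinuousOn (fderiv ℝ F) U := hF.continuousOn_fderiv_of_isOpen hU (by exact_mod_cast le_top)
  have hFd : ∀ y ∈ U, HasFDerivAt F (fderiv ℝ F y) y := fun y hy =>
    ((hF.differentiableOn (by simp)).differentiableAt (hU.mem_nhds hy)).hasFDerivAt
  set φ : (Fin n → ℝ) → ℝ := fun y => ∫ t in (0:ℝ)..1, F (c + t • (y - c)) (y - c) with hφdef
  have key : ∀ x ∈ U, HasFDerivAt φ (F x) x := by
    intro x hx
    -- geometry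
    set K : Set (Fin n → ℝ) := segment ℝ c x with hK
    have hKU : K ⊆ U := hconv.segment_subset hc hx
    have hKcomp : IsCompact K := by
      rw [hK, segment_eq_image']
      exact isCompact_Icc.image (by fun_prop)
    obtain ⟨δ, δpos, hδ⟩ := hKcomp.exists_thickening_subset_open hU hKU
    set ε := δ / 2 with hε
    have εpos : 0 < ε := half_pos δpos
    set C : Set (Fin n → ℝ) := cthickening ε K with hC
    have hCcomp : IsCompact C := hKcomp.cthickening
    have hCU : C ⊆ U := (cthickening_subset_thickening' δpos (half_lt_self δpos) K).trans hδ
    have hmemK : ∀ t ∈ Icc (0:ℝ) 1, c + t • (x - c) ∈ K := by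
      intro t ht
      rw [hK, segment_eq_image']
      exact ⟨t, ht, rfl⟩
    have hmemC : ∀ y ∈ ball x ε, ∀ t ∈ Icc (0:ℝ) 1, c + t • (y - c) ∈ C := by
      intro y hy t ht
      apply mem_cthickening_of_dist_le _ (c + t • (x - c)) _ _ (hmemK t ht)
      have heq : (c + t • (y - c)) - (c + t • (x - c)) = t • (y - x) := by
        rw [add_sub_add_left_eq_sub, ← smul_sub]
        congr 1
        abel
      have hle : dist (c + t • (y - c)) (c + t • (x - c)) ≤ dist y x := by
        rw [dist_eq_norm, heq, norm_smul, ← dist_eq_norm]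
        calc |t| * dist y x ≤ 1 * dist y x := by
              apply mul_le_mul_of_nonneg_right _ dist_nonneg
              rw [abs_of_nonneg ht.1]; exact ht.2
          _ = dist y x := one_mul _
      exact hle.trans (le_of_lt (mem_ball.1 hy))
    -- bounds
    obtain ⟨M₁, hM₁⟩ := hCcomp.exists_bound_of_continuousOn (hFc.mono hCU)
    obtain ⟨M₂, hM₂⟩ := hCcomp.exists_bound_of_continuousOn (f := fderiv ℝ F) (hF'c.mono hCU)
    have hcC : c ∈ C := self_subset_cthickening K (left_mem_segment ℝ c x)
    have hM₂0 : 0 ≤ M₂ := le_trans (norm_nonneg _) (hM₂ _ hcC)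
    set G' : (Fin n → ℝ) → ℝ → ((Fin n → ℝ) →L[ℝ] ℝ) := fun y t =>
      F (c + t • (y - c)) + t • ((fderiv ℝ F (c + t • (y - c))).flip (y - c)) with hG'
    have hpath : ∀ y : Fin n → ℝ, Continuous (fun t : ℝ => c + t • (y - c)) := by
      intro y; fun_prop
    have hGcont : ∀ y ∈ ball x ε,
        ContinuousOn (fun t => F (c + t • (y - c)) (y - c)) (Icc (0:ℝ) 1) := by
      intro y hy
      exact (hFc.comp (hpath y).continuousOn
        (fun t ht => hCU (hmemC y hy t ht))).clm_apply continuousOn_const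
    have hxball : x ∈ ball x ε := mem_ball_self εpos
    have hG'cont : ContinuousOn (fun t => G' x t) (Icc (0:ℝ) 1) := by
      have h1 : ContinuousOn (fun t => F (c + t • (x - c))) (Icc (0:ℝ) 1) :=
        hFc.comp (hpath x).continuousOn (fun t ht => hCU (hmemC x hxball t ht))
      have h2 : ContinuousOn (fun t => fderiv ℝ F (c + t • (x - c))) (Icc (0:ℝ) 1) :=
        hF'c.comp (hpath x).continuousOn (fun t ht => hCU (hmemC x hxball t ht))
      have h3 : ContinuousOn (fun t => (fderiv ℝ F (c + t • (x - c))).flip) (Icc (0:ℝ) 1) :=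
        (ContinuousLinearMap.flipₗᵢ ℝ (Fin n → ℝ) (Fin n → ℝ) ℝ).continuous.comp_continuousOn h2
      exact h1.add ((continuous_id.continuousOn).smul (h3.clm_apply continuousOn_const))
    have hint : IntervalIntegrable (fun t => G' x t) MeasureTheory.volume 0 1 := by
      apply ContinuousOn.intervalIntegrable
      rwa [uIcc_of_le zero_le_one]
    have main := intervalIntegral.hasFDerivAt_integral_of_dominated_of_fderiv_le
      (F := fun y t => F (c + t • (y - c)) (y - c)) (F' := G') (x₀ := x)
      (bound := fun _ => M₂ * (‖x - c‖ + ε) + M₁) (μ := MeasureTheory.volume)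
      (a := 0) (b := 1) (ball_mem_nhds x εpos) ?_ ?_ ?_ ?_ ?_ ?_
    rotate_left
    · -- hF_meas
      filter_upwards [ball_mem_nhds x εpos] with y hy
      exact ((hGcont y hy).mono (by rw [uIoc_of_le zero_le_one]; exact Ioc_subset_Icc_self)).aestronglyMeasurable measurableSet_uIoc
    · -- hF_int
      apply ContinuousOn.intervalIntegrable
      rw [uIcc_of_le zero_le_one]
      exact hGcont x hxball
    · -- hF'_meas
      exact (hG'cont.mono (by rw [uIoc_of_le zero_le_one]; exact Ioc_subset_Icc_self)).aestronglyMeasurable measurableSet_uIoc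
    · -- h_bound
      apply Filter.Eventually.of_forall
      intro t ht y hy
      rw [uIoc_of_le zero_le_one] at ht
      have ht' : t ∈ Icc (0:ℝ) 1 := Ioc_subset_Icc_self ht
      have hptC : c + t • (y - c) ∈ C := hmemC y hy t ht'
      have hyc : ‖y - c‖ ≤ ‖x - c‖ + ε := by
        calc ‖y - c‖ = ‖(y - x) + (x - c)‖ := by congr 1; abel
          _ ≤ ‖y - x‖ + ‖x - c‖ := norm_add_le _ _
          _ ≤ ε + ‖x - c‖ := by
              have : ‖y - x‖ ≤ ε := by
                rw [← dist_eq_norm]; exact le_of_lt (mem_ball.1 hy)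
              linarith
          _ = ‖x - c‖ + ε := by ring
      have h2 : ‖(fderiv ℝ F (c + t • (y - c))).flip (y - c)‖ ≤ M₂ * (‖x - c‖ + ε) := by
        calc ‖(fderiv ℝ F (c + t • (y - c))).flip (y - c)‖
            ≤ ‖(fderiv ℝ F (c + t • (y - c))).flip‖ * ‖y - c‖ :=
              ContinuousLinearMap.le_opNorm _ _
          _ ≤ M₂ * (‖x - c‖ + ε) := by
              rw [ContinuousLinearMap.opNorm_flip]
              exact mul_le_mul (hM₂ _ hptC) hyc (norm_nonneg _) hM₂0
      calc ‖G' y t‖ ≤ ‖F (c + t • (y - c))‖ +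
            ‖t • ((fderiv ℝ F (c + t • (y - c))).flip (y - c))‖ := norm_add_le _ _
        _ ≤ M₁ + 1 * (M₂ * (‖x - c‖ + ε)) := by
            rw [norm_smul]
            refine add_le_add (hM₁ _ hptC) (mul_le_mul ?_ h2 (norm_nonneg _) zero_le_one)
            rw [Real.norm_eq_abs, abs_of_pos ht.1]; exact ht.2
        _ = M₂ * (‖x - c‖ + ε) + M₁ := by ring
    · exact intervalIntegrable_const
    · -- h_diff
      apply Filter.Eventually.of_forall
      intro t ht y hy
      rw [uIoc_of_le zero_le_one] at ht
      have ht' : t ∈ Icc (0:ℝ) 1 := Ioc_subset_Icc_self ht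
      have hptU : c + t • (y - c) ∈ U := hCU (hmemC y hy t ht')
      have hA : HasFDerivAt (fun y' : Fin n → ℝ => c + t • (y' - c))
          (t • ContinuousLinearMap.id ℝ (Fin n → ℝ)) y := by
        have h : HasFDerivAt (fun y' : Fin n → ℝ => t • (y' - c))
            (t • (ContinuousLinearMap.id ℝ (Fin n → ℝ))) y :=
          ((hasFDerivAt_id y).sub_const c).const_smul t
        exact h.const_add c
      have h1 := (hFd _ hptU).comp y hA
      have h2 := h1.clm_apply ((hasFDerivAt_id y).sub_const c)
      convert h2 using 1
      · rfl
      ext v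
      simp only [hG', ContinuousLinearMap.add_apply, ContinuousLinearMap.comp_apply,
        ContinuousLinearMap.flip_apply, ContinuousLinearMap.smul_apply,
        ContinuousLinearMap.id_apply, ContinuousLinearMap.map_smul,
        ContinuousLinearMap.comp_id, smul_eq_mul, Function.comp_apply, id_eq]
    -- identify the derivative
    have hI : (∫ t in (0:ℝ)..1, G' x t) = F x := by
      ext v
      rw [ContinuousLinearMap.intervalIntegral_apply hint v]
      have hderiv : ∀ t ∈ uIcc (0:ℝ) 1,
          HasDerivAt (fun s => s * F (c + s • (x - c)) v) (G' x t v) t := by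
        intro t ht
        rw [uIcc_of_le zero_le_one] at ht
        have hptU : c + t • (x - c) ∈ U := hKU (hmemK t ht)
        have hp : HasDerivAt (fun s : ℝ => c + s • (x - c)) (x - c) t := by
          simpa using ((hasDerivAt_id t).smul_const (x - c)).const_add c
        have h1 : HasDerivAt (fun s => F (c + s • (x - c)))
            (fderiv ℝ F (c + t • (x - c)) (x - c)) t :=
          (hFd _ hptU).comp_hasDerivAt t hp
        have h2 := h1.clm_apply (hasDerivAt_const t v)
        have h3 := (hasDerivAt_id t).mul h2
        convert h3 using 1
        all_goals try rfl
        simp only [hG', ContinuousLinearMap.add_apply, ContinuousLinearMap.smul_apply,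
          ContinuousLinearMap.flip_apply, smul_eq_mul, map_zero, add_zero, one_mul, id]
        rw [hsym _ hptU v (x - c)]
      have hint' : IntervalIntegrable (fun t => G' x t v) MeasureTheory.volume 0 1 := by
        apply ContinuousOn.intervalIntegrable
        rw [uIcc_of_le zero_le_one]
        exact hG'cont.clm_apply continuousOn_const
      have := intervalIntegral.integral_eq_sub_of_hasDerivAt hderiv hint'
      rw [this]
      simp
    rw [hφdef]
    rw [← hI]
    exact main
  refine ⟨φ, ?_, key⟩
  rw [contDiffOn_infty_iff_fderiv_of_isOpen hU]
  refine ⟨fun y hy => ((key y hy).differentiableAt).differentiableWithinAt, ?_⟩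
  exact hF.congr fun y hy => (key y hy).fderiv

/-- on a nonempty open convex set `U ⊆ ℝⁿ`, a smooth symmetric-matrix-valued
map `g` with the Codazzi symmetry `∂_k g_{ij} = ∂_i g_{kj}` is a Hessian:
there is a smooth `φ : U → ℝ` with `g_{ij} = ∂_i∂_j φ` on `U`. -/
theorem stmt2
    (n : ℕ) (hn : 1 ≤ n) (U : Set (Fin n → ℝ)) (hU : IsOpen U) (hUconv : Convex ℝ U)
    (hUne : U.Nonempty)
    (g : (Fin n → ℝ) → Matrix (Fin n) (Fin n) ℝ)
    (hsmooth : ∀ i j : Fin n, ContDiffOn ℝ (⊤ : ℕ∞) (fun x => g x i j) U)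
    (hsymm : ∀ x ∈ U, (g x).IsSymm)
    (hcod : ∀ x ∈ U, ∀ i j k : Fin n,
      pd n k (fun y => g y i j) x = pd n i (fun y => g y k j) x) :
    ∃ φ : (Fin n → ℝ) → ℝ, ContDiffOn ℝ (⊤ : ℕ∞) φ U ∧
      ∀ x ∈ U, ∀ i j : Fin n, g x i j = pd n i (pd n j φ) x := by
    classical
  obtain ⟨c, hc⟩ := hUne
  have hexp : ∀ (f : (Fin n → ℝ) → ℝ) (x : Fin n → ℝ) (v : Fin n → ℝ),
      fderiv ℝ f x v = ∑ k, v k * pd n k f x := by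
    intro f x v
    have hv : v = ∑ k, v k • (Pi.single k 1 : Fin n → ℝ) := by
      ext j
      rw [Finset.sum_apply]
      simp [Pi.single_apply]
    conv_lhs => rw [hv]
    rw [map_sum]
    exact Finset.sum_congr rfl fun k _ => by rw [_root_.map_smul]; simp [pd, smul_eq_mul]
  set Fj : Fin n → (Fin n → ℝ) → ((Fin n → ℝ) →L[ℝ] ℝ) := fun j x =>
    ∑ i, g x i j • ContinuousLinearMap.proj i with hFjdef
  have hFjapp : ∀ j x v, Fj j x v = ∑ i, g x i j * v i := by
    intro j x v
    simp [hFjdef, ContinuousLinearMap.sum_apply, ContinuousLinearMap.smul_apply,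
      ContinuousLinearMap.proj_apply, smul_eq_mul]
  have hFjsmooth : ∀ j, ContDiffOn ℝ (⊤ : ℕ∞) (Fj j) U := fun j =>
    ContDiffOn.sum fun i _ => (hsmooth i j).smul contDiffOn_const
  have hgd : ∀ (i j : Fin n), ∀ x ∈ U,
      HasFDerivAt (fun y => g y i j) (fderiv ℝ (fun y => g y i j) x) x := fun i j x hx =>
    (((hsmooth i j).differentiableOn (by simp)).differentiableAt
      (hU.mem_nhds hx)).hasFDerivAt
  have hFjd : ∀ j, ∀ x ∈ U, HasFDerivAt (Fj j)
      (∑ i, (fderiv ℝ (fun y => g y i j) x).smulRight (ContinuousLinearMap.proj i)) x :=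
    fun j x hx => HasFDerivAt.fun_sum fun i _ => (hgd i j x hx).smul_const (ContinuousLinearMap.proj (R := ℝ) (φ := fun _ : Fin n => ℝ) i)
  have hFjsym : ∀ j, ∀ x ∈ U, ∀ v w, fderiv ℝ (Fj j) x v w = fderiv ℝ (Fj j) x w v := by
    intro j x hx v w
    rw [(hFjd j x hx).fderiv]
    simp only [ContinuousLinearMap.sum_apply, ContinuousLinearMap.smulRight_apply,
      ContinuousLinearMap.proj_apply, smul_eq_mul]
    calc ∑ i, fderiv ℝ (fun y => g y i j) x v * w i
        = ∑ i, ∑ k, v k * pd n i (fun y => g y k j) x * w i := by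
          refine Finset.sum_congr rfl fun i _ => ?_
          rw [hexp (fun y => g y i j) x v, Finset.sum_mul]
          exact Finset.sum_congr rfl fun k _ => by rw [hcod x hx i j k]
      _ = ∑ k, ∑ i, v k * pd n i (fun y => g y k j) x * w i := Finset.sum_comm
      _ = ∑ i, fderiv ℝ (fun y => g y i j) x w * v i := by
          refine Finset.sum_congr rfl fun k _ => ?_
          rw [hexp (fun y => g y k j) x w, Finset.sum_mul]
          exact Finset.sum_congr rfl fun i _ => by ring
  choose f hf1 hf2 using fun j : Fin n =>
    poincare hU hUconv hc (Fj j) (hFjsmooth j) (hFjsym j)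
  set F2 : (Fin n → ℝ) → ((Fin n → ℝ) →L[ℝ] ℝ) := fun x =>
    ∑ j, f j x • ContinuousLinearMap.proj j with hF2def
  have hF2smooth : ContDiffOn ℝ (⊤ : ℕ∞) F2 U :=
    ContDiffOn.sum fun j _ => (hf1 j).smul contDiffOn_const
  have hF2d : ∀ x ∈ U, HasFDerivAt F2
      (∑ j, (Fj j x).smulRight (ContinuousLinearMap.proj j)) x :=
    fun x hx => HasFDerivAt.fun_sum fun j _ => (hf2 j x hx).smul_const (ContinuousLinearMap.proj (R := ℝ) (φ := fun _ : Fin n => ℝ) j)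
  have hF2sym : ∀ x ∈ U, ∀ v w, fderiv ℝ F2 x v w = fderiv ℝ F2 x w v := by
    intro x hx v w
    rw [(hF2d x hx).fderiv]
    simp only [ContinuousLinearMap.sum_apply, ContinuousLinearMap.smulRight_apply,
      ContinuousLinearMap.proj_apply, smul_eq_mul]
    calc ∑ j, Fj j x v * w j
        = ∑ j, ∑ i, g x i j * v i * w j := by
          refine Finset.sum_congr rfl fun j _ => ?_
          rw [hFjapp, Finset.sum_mul]
      _ = ∑ i, ∑ j, g x i j * v i * w j := Finset.sum_comm
      _ = ∑ j, Fj j x w * v j := by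
          refine Finset.sum_congr rfl fun a _ => ?_
          rw [hFjapp, Finset.sum_mul]
          refine Finset.sum_congr rfl fun b _ => ?_
          rw [(hsymm x hx).apply a b]
          ring
  obtain ⟨φ, hφ1, hφ2⟩ := poincare hU hUconv hc F2 hF2smooth hF2sym
  refine ⟨φ, hφ1, ?_⟩
  intro x hx i j
  have hev : (fun y => pd n j φ y) =ᶠ[nhds x] fun y => f j y := by
    filter_upwards [hU.mem_nhds hx] with y hy
    show fderiv ℝ φ y (Pi.single j 1) = f j y
    rw [(hφ2 y hy).fderiv]
    simp [hF2def, ContinuousLinearMap.sum_apply, ContinuousLinearMap.smul_apply,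
      ContinuousLinearMap.proj_apply, Pi.single_apply, smul_eq_mul, mul_ite,
      Finset.sum_ite_eq']
  have h1 : pd n i (pd n j φ) x = fderiv ℝ (fun y => f j y) x (Pi.single i 1) := by
    show fderiv ℝ (pd n j φ) x (Pi.single i 1) = _
    rw [hev.fderiv_eq]
  have h2 : fderiv ℝ (fun y => f j y) x = Fj j x := (hf2 j x hx).fderiv
  rw [h1, h2, hFjapp]
  simp [Pi.single_apply]
end

section
/- Let φ : U → ℝ be smooth on an open set U ⊆ ℝⁿ with positive-definite Hessian, g_{ij} := ∂_i∂_j φ. Define the Hessian curvature tensor Q_{ijkl} := ½ ∂_i∂_j∂_k∂_l φ − ½ Σ_{p,q} g^{pq} (∂_i∂_k∂_p φ)(∂_j∂_l∂_q φ), and the lowered Riemann curvature R̂_{ijkl} := Σ_m g_{im} R̂^m_{jkl}, where R̂^m_{jkl} := ∂_k γ^m_{lj} − ∂_l γ^m_{kj} + Σ_a ( γ^m_{ka} γ^a_{lj} − γ^m_{la} γ^a_{kj} ) with γ^m_{jk} := ½ Σ_p g^{mp} ∂_p∂_j∂_k φ. Then R̂_{ijkl} = ½ ( Q_{ijkl}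 − Q_{jikl} ) at every point of U and for all indices i,j,k,l. -/
open Set Matrix

lemma pd_congr_nhds {n : ℕ} {i : Fin n} {f h : (Fin n → ℝ) → ℝ} {x : Fin n → ℝ}
    (hfh : f =ᶠ[nhds x] h) : pd n i f x = pd n i h x := by
  unfold pd; rw [hfh.fderiv_eq]

lemma pd_congrU {n : ℕ} {U : Set (Fin n → ℝ)} (hU : IsOpen U) {i : Fin n}
    {f h : (Fin n → ℝ) → ℝ} {x : Fin n → ℝ} (hx : x ∈ U)
    (hfh : ∀ y ∈ U, f y = h y) : pd n i f x = pd n i h x :=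
  pd_congr_nhds (Filter.eventually_of_mem (hU.mem_nhds hx) hfh)

lemma contDiffOn_pd {n : ℕ} {U : Set (Fin n → ℝ)} (hU : IsOpen U)
    {f : (Fin n → ℝ) → ℝ} (hf : ContDiffOn ℝ (⊤ : ℕ∞) f U) (i : Fin n) :
    ContDiffOn ℝ (⊤ : ℕ∞) (pd n i f) U := by
  have h1 : ContDiffOn ℝ (⊤ : ℕ∞) (fderiv ℝ f) U := hf.fderiv_of_isOpen hU (by simp)
  exact h1.clm_apply contDiffOn_const

lemma dAt {n : ℕ} {U : Set (Fin n → ℝ)} (hU : IsOpen U)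
    {f : (Fin n → ℝ) → ℝ} (hf : ContDiffOn ℝ (⊤ : ℕ∞) f U) {x : Fin n → ℝ} (hx : x ∈ U) :
    DifferentiableAt ℝ f x :=
  (hf.differentiableOn (by simp)).differentiableAt (hU.mem_nhds hx)

lemma pd_comm {n : ℕ} {U : Set (Fin n → ℝ)} (hU : IsOpen U)
    {f : (Fin n → ℝ) → ℝ} (hf : ContDiffOn ℝ (⊤ : ℕ∞) f U) {x : Fin n → ℝ} (hx : x ∈ U)
    (i j : Fin n) : pd n i (pd n j f) x = pd n j (pd n i f) x := by
  set f' := fderiv ℝ f with hf'def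
  have hder : ∀ᶠ y in nhds x, HasFDerivAt f (f' y) y := by
    filter_upwards [hU.mem_nhds hx] with y hy
    exact (dAt hU hf hy).hasFDerivAt
  have hCD : ContDiffOn ℝ (⊤ : ℕ∞) (fderiv ℝ f) U := hf.fderiv_of_isOpen hU (by simp)
  have hdiff' : DifferentiableAt ℝ f' x :=
    ((hCD.differentiableOn (by simp)).differentiableAt (hU.mem_nhds hx))
  have hx2 : HasFDerivAt f' (fderiv ℝ f' x) x := hdiff'.hasFDerivAt
  have hsymm := second_derivative_symmetric_of_eventually hder hx2
  have key : ∀ a b : Fin n,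
      pd n a (pd n b f) x = fderiv ℝ f' x (Pi.single a 1) (Pi.single b 1) := by
    intro a b
    have hc : HasFDerivAt (fun y => f' y (Pi.single b 1))
        ((ContinuousLinearMap.apply ℝ ℝ ((Pi.single b 1 : Fin n → ℝ))).comp (fderiv ℝ f' x)) x :=
      (ContinuousLinearMap.apply ℝ ℝ ((Pi.single b 1 : Fin n → ℝ))).hasFDerivAt.comp x hx2
    have : pd n a (pd n b f) x = fderiv ℝ (fun y => f' y (Pi.single b 1)) x (Pi.single a 1) := rfl
    rw [this, hc.fderiv]
    rfl
  rw [key i j, key j i, hsymm]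

lemma pd_sum {n : ℕ} {i : Fin n} {ι : Type*} {s : Finset ι} {F : ι → (Fin n → ℝ) → ℝ}
    {x : Fin n → ℝ} (h : ∀ m ∈ s, DifferentiableAt ℝ (F m) x) :
    pd n i (fun y => ∑ m ∈ s, F m y) x = ∑ m ∈ s, pd n i (F m) x := by
  unfold pd; rw [fderiv_fun_sum h]; simp

lemma pd_mul {n : ℕ} {i : Fin n} {u v : (Fin n → ℝ) → ℝ} {x : Fin n → ℝ}
    (hu : DifferentiableAt ℝ u x) (hv : DifferentiableAt ℝ v x) :
    pd n i (fun y => u y * v y) x = pd n i u x * v x + u x * pd n i v x := by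
  unfold pd; rw [fderiv_fun_mul hu hv]; simp; ring

lemma pd_const_mul {n : ℕ} {i : Fin n} {v : (Fin n → ℝ) → ℝ} {x : Fin n → ℝ}
    (hv : DifferentiableAt ℝ v x) (b : ℝ) :
    pd n i (fun y => b * v y) x = b * pd n i v x := by
  unfold pd; rw [fderiv_const_mul hv b]; simp

lemma differentiableAt_det {n m : ℕ} {M : (Fin n → ℝ) → Matrix (Fin m) (Fin m) ℝ}
    {x : Fin n → ℝ} (h : ∀ a b, DifferentiableAt ℝ (fun y => M y a b) x) :
    DifferentiableAt ℝ (fun y => (M y).det) x := by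
  simp only [Matrix.det_apply']
  apply DifferentiableAt.fun_sum
  intro σ _
  have h2 : ∀ s : Finset (Fin m), DifferentiableAt ℝ (fun y => ∏ a ∈ s, M y (σ a) a) x := by
    intro s
    classical
    induction s using Finset.induction with
    | empty => simpa using differentiableAt_const (1 : ℝ)
    | insert _ _ hnot ih =>
      simp only [Finset.prod_insert hnot]
      exact (h _ _).mul ih
  exact (h2 Finset.univ).const_mul _

/-- for a Hessian metric `g = D²φ`, with Hessian curvature tensor
`Q_{ijkl} = ½ ∂_i∂_j∂_k∂_l φ - ½ Σ_{p,q} g^{pq}(∂_i∂_k∂_p φ)(∂_j∂_l∂_q φ)` and lowered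
Riemann curvature `R̂_{ijkl} = Σ_m g_{im} R̂^m_{jkl}`, one has
`R̂_{ijkl} = ½ (Q_{ijkl} - Q_{jikl})`. -/
theorem stmt6
    (n : ℕ) (hn : 1 ≤ n) (U : Set (Fin n → ℝ)) (hU : IsOpen U) (hUne : U.Nonempty)
    (φ : (Fin n → ℝ) → ℝ)
    (hφ : ContDiffOn ℝ (⊤ : ℕ∞) φ U)
    -- the Hessian metric `g_{ij} = ∂_i∂_j φ`
    (g : (Fin n → ℝ) → Matrix (Fin n) (Fin n) ℝ)
    (hg : ∀ x, g x = Matrix.of (fun i j : Fin n => pd n i (pd n j φ) x))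
    (hpos : ∀ x ∈ U, (g x).PosDef)
    -- `γ^m_{jk} := ½ Σ_p g^{mp} ∂_p∂_j∂_k φ`
    (γ : Fin n → Fin n → Fin n → (Fin n → ℝ) → ℝ)
    (hγ : ∀ m j k : Fin n, ∀ x, γ m j k x = (1/2 : ℝ) *
      ∑ p : Fin n, (g x)⁻¹ m p * pd n p (pd n j (pd n k φ)) x)
    -- `R̂^m_{jkl} := ∂_k γ^m_{lj} - ∂_l γ^m_{kj} + Σ_a (γ^m_{ka}γ^a_{lj} - γ^m_{la}γ^a_{kj})`
    (Rup : Fin n → Fin n → Fin n → Fin n → (Fin n → ℝ) → ℝ)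
    (hRup : ∀ m j k l : Fin n, ∀ x, Rup m j k l x =
      pd n k (fun y => γ m l j y) x - pd n l (fun y => γ m k j y) x
        + ∑ a : Fin n, (γ m k a x * γ a l j x - γ m l a x * γ a k j x))
    -- `R̂_{ijkl} := Σ_m g_{im} R̂^m_{jkl}`
    (Rlow : Fin n → Fin n → Fin n → Fin n → (Fin n → ℝ) → ℝ)
    (hRlow : ∀ i j k l : Fin n, ∀ x, Rlow i j k l x = ∑ m : Fin n, g x i m * Rup m j k l x)
    -- `Q_{ijkl} := ½ ∂_i∂_j∂_k∂_l φ - ½ Σ_{p,q} g^{pq} (∂_i∂_k∂_p φ)(∂_j∂_l∂_q φ)`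
    (Q : Fin n → Fin n → Fin n → Fin n → (Fin n → ℝ) → ℝ)
    (hQ : ∀ i j k l : Fin n, ∀ x, Q i j k l x =
      (1/2 : ℝ) * pd n i (pd n j (pd n k (pd n l φ))) x
        - (1/2 : ℝ) * ∑ p : Fin n, ∑ q : Fin n, (g x)⁻¹ p q *
            (pd n i (pd n k (pd n p φ)) x) * (pd n j (pd n l (pd n q φ)) x)) :
    ∀ x ∈ U, ∀ i j k l : Fin n,
      Rlow i j k l x = (1/2 : ℝ) * (Q i j k l x - Q j i k l x) := by
  intro x hx i j k l
  -- smoothness of iterated partial derivatives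
  have sm1 : ∀ a : Fin n, ContDiffOn ℝ (⊤ : ℕ∞) (pd n a φ) U := fun a => contDiffOn_pd hU hφ a
  have sm2 : ∀ a b : Fin n, ContDiffOn ℝ (⊤ : ℕ∞) (pd n a (pd n b φ)) U :=
    fun a b => contDiffOn_pd hU (sm1 b) a
  have sm3 : ∀ a b c : Fin n, ContDiffOn ℝ (⊤ : ℕ∞) (pd n a (pd n b (pd n c φ))) U :=
    fun a b c => contDiffOn_pd hU (sm2 b c) a
  -- entries of g
  have gent : ∀ y, ∀ a b : Fin n, g y a b = pd n a (pd n b φ) y := fun y a b => by rw [hg]; rfl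
  have gfun : ∀ a b : Fin n, (fun y => g y a b) = pd n a (pd n b φ) :=
    fun a b => funext fun y => gent y a b
  have hdg : ∀ a b : Fin n, DifferentiableAt ℝ (fun y => g y a b) x := fun a b => by
    rw [gfun]; exact dAt hU (sm2 a b) hx
  have hdet0 : (g x).det ≠ 0 := (hpos x hx).det_pos.ne'
  have hdetdiff : DifferentiableAt ℝ (fun y => (g y).det) x := differentiableAt_det hdg
  have hadjdiff : ∀ a b : Fin n, DifferentiableAt ℝ (fun y => (g y).adjugate a b) x := by
    intro a b
    have he : (fun y => (g y).adjugate a b)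
        = fun y => ((g y).updateRow b (Pi.single a 1)).det :=
      funext fun y => Matrix.adjugate_apply _ _ _
    rw [he]
    apply differentiableAt_det
    intro c d
    rcases eq_or_ne c b with h1 | h1
    · subst h1
      simp only [Matrix.updateRow_apply, if_pos rfl]
      exact differentiableAt_const _
    · simp only [Matrix.updateRow_apply, if_neg h1]
      exact hdg c d
  have hginvdiff : ∀ a b : Fin n, DifferentiableAt ℝ (fun y => (g y)⁻¹ a b) x := by
    intro a b
    have he : (fun y => (g y)⁻¹ a b) = fun y => ((g y).det)⁻¹ * (g y).adjugate a b := by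
      funext y
      rw [Matrix.inv_def, Matrix.smul_apply, Ring.inverse_eq_inv, smul_eq_mul]
    rw [he]
    exact (hdetdiff.inv hdet0).mul (hadjdiff a b)
  have hdγ : ∀ m c d : Fin n, DifferentiableAt ℝ (γ m c d) x := by
    intro m c d
    have he : γ m c d = fun y => (1/2 : ℝ) *
        ∑ p : Fin n, (g y)⁻¹ m p * pd n p (pd n c (pd n d φ)) y :=
      funext fun y => hγ m c d y
    rw [he]
    have h2 : DifferentiableAt ℝ
        (fun y => ∑ p : Fin n, (g y)⁻¹ m p * pd n p (pd n c (pd n d φ)) y) x :=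
      DifferentiableAt.fun_sum fun p _ => (hginvdiff m p).mul (dAt hU (sm3 p c d) hx)
    exact h2.const_mul _
  -- the contraction identity `Σ_m g_{am} γ^m_{cd} = ½ ∂_a∂_c∂_d φ` on U
  have hinvmul : ∀ y ∈ U, ∀ a p : Fin n,
      (∑ m : Fin n, g y a m * (g y)⁻¹ m p) = if a = p then (1:ℝ) else 0 := by
    intro y hy a p
    have h1 : g y * (g y)⁻¹ = 1 := Matrix.mul_nonsing_inv _ ((hpos y hy).det_pos.ne'.isUnit)
    calc (∑ m : Fin n, g y a m * (g y)⁻¹ m p) = (g y * (g y)⁻¹) a p := (Matrix.mul_apply).symm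
      _ = (1 : Matrix (Fin n) (Fin n) ℝ) a p := by rw [h1]
      _ = if a = p then (1:ℝ) else 0 := Matrix.one_apply
  have key : ∀ y ∈ U, ∀ a c d : Fin n,
      ∑ m : Fin n, g y a m * γ m c d y = (1/2 : ℝ) * pd n a (pd n c (pd n d φ)) y := by
    intro y hy a c d
    have h1 : ∀ m : Fin n, g y a m * γ m c d y
        = ∑ p : Fin n, (1/2 : ℝ) * (g y a m * (g y)⁻¹ m p * pd n p (pd n c (pd n d φ)) y) := by
      intro m
      rw [hγ m c d y, Finset.mul_sum, Finset.mul_sum]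
      exact Finset.sum_congr rfl fun p _ => by ring
    rw [Finset.sum_congr rfl fun m _ => h1 m, Finset.sum_comm]
    have h2 : ∀ p : Fin n,
        ∑ m : Fin n, (1/2 : ℝ) * (g y a m * (g y)⁻¹ m p * pd n p (pd n c (pd n d φ)) y)
        = (1/2 : ℝ) * ((if a = p then (1:ℝ) else 0) * pd n p (pd n c (pd n d φ)) y) := by
      intro p
      rw [← hinvmul y hy a p, Finset.sum_mul, Finset.mul_sum]
    rw [Finset.sum_congr rfl fun p _ => h2 p, ← Finset.mul_sum]
    congr 1
    simp only [ite_mul, one_mul, zero_mul, Finset.sum_ite_eq, Finset.mem_univ, if_true]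
  -- derivative of the contraction
  have keyD : ∀ a c d e : Fin n,
      ∑ m : Fin n, g x a m * pd n e (fun y => γ m c d y) x
        = (1/2 : ℝ) * pd n e (pd n a (pd n c (pd n d φ))) x
          - ∑ m : Fin n, pd n e (pd n a (pd n m φ)) x * γ m c d x := by
    intro a c d e
    have hL : pd n e (fun y => ∑ m : Fin n, g y a m * γ m c d y) x
        = ∑ m : Fin n, (pd n e (fun y => g y a m) x * γ m c d x
            + g x a m * pd n e (fun y => γ m c d y) x) := by
      rw [pd_sum (fun m _ => (hdg a m).fun_mul (hdγ m c d))]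
      exact Finset.sum_congr rfl fun m _ => pd_mul (hdg a m) (hdγ m c d)
    have hR : pd n e (fun y => ∑ m : Fin n, g y a m * γ m c d y) x
        = (1/2 : ℝ) * pd n e (pd n a (pd n c (pd n d φ))) x := by
      rw [pd_congrU hU hx (fun y hy => key y hy a c d)]
      exact pd_const_mul (dAt hU (sm3 a c d) hx) _
    have hsplit : ∑ m : Fin n, (pd n e (fun y => g y a m) x * γ m c d x
            + g x a m * pd n e (fun y => γ m c d y) x)
        = (∑ m : Fin n, pd n e (pd n a (pd n m φ)) x * γ m c d x)
          + ∑ m : Fin n, g x a m * pd n e (fun y => γ m c d y) x := by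
      rw [Finset.sum_add_distrib]
      congr 1
      exact Finset.sum_congr rfl fun m _ => by rw [gfun a m]
    have hcomb := hL.symm.trans hR
    rw [hsplit] at hcomb
    linarith [hcomb]
  -- symmetry of third and fourth partial derivatives at x
  have t3a : ∀ a b c : Fin n, pd n a (pd n b (pd n c φ)) x = pd n b (pd n a (pd n c φ)) x :=
    fun a b c => pd_comm hU (sm1 c) hx a b
  have t3b : ∀ a b c : Fin n, pd n a (pd n b (pd n c φ)) x = pd n a (pd n c (pd n b φ)) x :=
    fun a b c => pd_congrU hU hx fun y hy => pd_comm hU hφ hy b c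
  have t3rot : ∀ a b c : Fin n, pd n a (pd n b (pd n c φ)) x = pd n c (pd n b (pd n a φ)) x :=
    fun a b c => by rw [t3a, t3b, t3a]
  have s23 : ∀ a b c d : Fin n, pd n a (pd n b (pd n c (pd n d φ))) x
      = pd n a (pd n c (pd n b (pd n d φ))) x :=
    fun a b c d => pd_congrU hU hx fun y hy => pd_comm hU (sm1 d) hy b c
  have s12 : ∀ a b c d : Fin n, pd n a (pd n b (pd n c (pd n d φ))) x
      = pd n b (pd n a (pd n c (pd n d φ))) x :=
    fun a b c d => pd_comm hU (sm2 c d) hx a b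
  have c1 : pd n k (pd n i (pd n l (pd n j φ))) x = pd n l (pd n i (pd n k (pd n j φ))) x := by
    rw [s23 k i l j, s12 k l i j, s23 l k i j]
  have c0 : pd n j (pd n i (pd n k (pd n l φ))) x = pd n i (pd n j (pd n k (pd n l φ))) x :=
    s12 j i k l
  -- symmetry of the inverse metric at x
  have hginvsym : ∀ a b : Fin n, (g x)⁻¹ a b = (g x)⁻¹ b a := by
    have hgs : (g x)ᵀ = g x := by
      ext a b
      rw [Matrix.transpose_apply, gent, gent]
      exact pd_comm hU hφ hx b a
    have htr : ((g x)⁻¹)ᵀ = (g x)⁻¹ := by rw [Matrix.transpose_nonsing_inv, hgs]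
    intro a b
    conv_lhs => rw [← htr]
    exact Matrix.transpose_apply _ _ _
  -- expansion of Rlow
  have hRl : Rlow i j k l x =
      (∑ m : Fin n, g x i m * pd n k (fun y => γ m l j y) x)
      - (∑ m : Fin n, g x i m * pd n l (fun y => γ m k j y) x)
      + ((∑ m : Fin n, ∑ a : Fin n, g x i m * (γ m k a x * γ a l j x))
        - ∑ m : Fin n, ∑ a : Fin n, g x i m * (γ m l a x * γ a k j x)) := by
    rw [hRlow]
    have h1 : ∀ m : Fin n, g x i m * Rup m j k l x =
        g x i m * pd n k (fun y => γ m l j y) x - g x i m * pd n l (fun y => γ m k j y) x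
        + ((∑ a : Fin n, g x i m * (γ m k a x * γ a l j x))
          - ∑ a : Fin n, g x i m * (γ m l a x * γ a k j x)) := by
      intro m
      rw [hRup m j k l x, mul_add, mul_sub, Finset.mul_sum]
      congr 1
      rw [← Finset.sum_sub_distrib]
      exact Finset.sum_congr rfl fun a _ => by ring
    rw [Finset.sum_congr rfl fun m _ => h1 m, Finset.sum_add_distrib,
      Finset.sum_sub_distrib, Finset.sum_sub_distrib]
  -- first derivative blocks
  have hK1 : ∑ m : Fin n, g x i m * pd n k (fun y => γ m l j y) x
      = (1/2 : ℝ) * pd n l (pd n i (pd n k (pd n j φ))) x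
        - ∑ m : Fin n, pd n i (pd n k (pd n m φ)) x * γ m l j x := by
    have h := keyD i l j k
    rw [c1] at h
    rw [show (∑ m : Fin n, pd n k (pd n i (pd n m φ)) x * γ m l j x)
        = ∑ m : Fin n, pd n i (pd n k (pd n m φ)) x * γ m l j x from
      Finset.sum_congr rfl fun m _ => by rw [t3a k i m]] at h
    exact h
  have hK2 : ∑ m : Fin n, g x i m * pd n l (fun y => γ m k j y) x
      = (1/2 : ℝ) * pd n l (pd n i (pd n k (pd n j φ))) x
        - ∑ m : Fin n, pd n i (pd n l (pd n m φ)) x * γ m k j x := by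
    have h := keyD i k j l
    rw [show (∑ m : Fin n, pd n l (pd n i (pd n m φ)) x * γ m k j x)
        = ∑ m : Fin n, pd n i (pd n l (pd n m φ)) x * γ m k j x from
      Finset.sum_congr rfl fun m _ => by rw [t3a l i m]] at h
    exact h
  -- quadratic blocks
  have hP1 : ∑ m : Fin n, ∑ a : Fin n, g x i m * (γ m k a x * γ a l j x)
      = (1/2 : ℝ) * ∑ m : Fin n, pd n i (pd n k (pd n m φ)) x * γ m l j x := by
    rw [Finset.sum_comm, Finset.mul_sum]
    refine Finset.sum_congr rfl fun a _ => ?_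
    have h1 : ∑ m : Fin n, g x i m * (γ m k a x * γ a l j x)
        = (∑ m : Fin n, g x i m * γ m k a x) * γ a l j x := by
      rw [Finset.sum_mul]
      exact Finset.sum_congr rfl fun m _ => by ring
    rw [h1, key x hx i k a]
    ring
  have hP2 : ∑ m : Fin n, ∑ a : Fin n, g x i m * (γ m l a x * γ a k j x)
      = (1/2 : ℝ) * ∑ m : Fin n, pd n i (pd n l (pd n m φ)) x * γ m k j x := by
    rw [Finset.sum_comm, Finset.mul_sum]
    refine Finset.sum_congr rfl fun a _ => ?_
    have h1 : ∑ m : Fin n, g x i m * (γ m l a x * γ a k j x)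
        = (∑ m : Fin n, g x i m * γ m l a x) * γ a k j x := by
      rw [Finset.sum_mul]
      exact Finset.sum_congr rfl fun m _ => by ring
    rw [h1, key x hx i l a]
    ring
  -- expanding γ inside the single sums into double sums matching Q
  have hSA : ∑ m : Fin n, pd n i (pd n k (pd n m φ)) x * γ m l j x
      = (1/2 : ℝ) * ∑ p : Fin n, ∑ q : Fin n, (g x)⁻¹ p q *
          (pd n i (pd n k (pd n p φ)) x) * (pd n j (pd n l (pd n q φ)) x) := by
    rw [Finset.mul_sum]
    refine Finset.sum_congr rfl fun p _ => ?_
    rw [hγ p l j x, Finset.mul_sum, Finset.mul_sum, Finset.mul_sum]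
    refine Finset.sum_congr rfl fun q _ => ?_
    rw [t3rot q l j]
    ring
  have hSB : ∑ m : Fin n, pd n i (pd n l (pd n m φ)) x * γ m k j x
      = (1/2 : ℝ) * ∑ p : Fin n, ∑ q : Fin n, (g x)⁻¹ p q *
          (pd n j (pd n k (pd n p φ)) x) * (pd n i (pd n l (pd n q φ)) x) := by
    have h1 : ∀ q : Fin n, pd n i (pd n l (pd n q φ)) x * γ q k j x
        = ∑ p : Fin n, (1/2 : ℝ) * ((g x)⁻¹ p q *
            (pd n j (pd n k (pd n p φ)) x) * (pd n i (pd n l (pd n q φ)) x)) := by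
      intro q
      rw [hγ q k j x, Finset.mul_sum, Finset.mul_sum]
      refine Finset.sum_congr rfl fun p _ => ?_
      rw [t3rot p k j, hginvsym q p]
      ring
    rw [Finset.sum_congr rfl fun q _ => h1 q, Finset.sum_comm, Finset.mul_sum]
    refine Finset.sum_congr rfl fun p _ => ?_
    rw [Finset.mul_sum]
  -- put everything together
  rw [hRl, hK1, hK2, hP1, hP2, hSA, hSB, hQ, hQ, c0]
  ring
end

section
/- Let g : U × [0,S] → (symmetric positive-definite n×n real matrices) be a smooth solution of the geometric flow ∂_t g_{ij}(x,t) = ∂_i∂_j log det g(x,t) on an open set U ⊆ ℝⁿ. Define G̃_{ij}(z,t) := g_{ij}(Re z, t/4) on T_U × [0, 4S]. Then G̃ is a solution of the Chern–Ricci flow on the tube domain: for all (z,t) ∈ T_U × [0,4S] and all i,j, ∂_t G̃_{ij}(z,t) = ∂²/∂z^i∂z̄^j [ log det G̃(·,t) ](z) = −R_{i j̄}(G̃(·,t))(z), with initial value G̃_{ij}(z,0) = g_{ij}(Re z, 0). -/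
open Set Matrix

/-- The real part map `ℂⁿ → ℝⁿ` (the projection `π` of the tube domain). -/
def rePart (n : ℕ) (z : Fin n → ℂ) : Fin n → ℝ := fun k => (z k).re

/-- Wirtinger derivative `∂f/∂z^j = ½(∂f/∂x^j - i ∂f/∂y^j)`. -/
noncomputable def wdz (n : ℕ) (j : Fin n) (f : (Fin n → ℂ) → ℂ) (z : Fin n → ℂ) : ℂ :=
  (1/2 : ℂ) * (fderiv ℝ f z (Pi.single j 1)
    - Complex.I * fderiv ℝ f z (Pi.single j Complex.I))

/-- Wirtinger derivative `∂f/∂z̄^j = ½(∂f/∂x^j + i ∂f/∂y^j)`. -/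
noncomputable def wdzbar (n : ℕ) (j : Fin n) (f : (Fin n → ℂ) → ℂ) (z : Fin n → ℂ) : ℂ :=
  (1/2 : ℂ) * (fderiv ℝ f z (Pi.single j 1)
    + Complex.I * fderiv ℝ f z (Pi.single j Complex.I))

/-- real-part map as a CLM -/
noncomputable def reCLMpi (n : ℕ) : ((Fin n → ℂ) →L[ℝ] (Fin n → ℝ)) :=
  ContinuousLinearMap.pi (fun k => Complex.reCLM.comp (ContinuousLinearMap.proj k))

lemma reCLMpi_eq (n : ℕ) (z : Fin n → ℂ) : reCLMpi n z = rePart n z := rfl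

lemma reCLMpi_single_one (n : ℕ) (j : Fin n) :
    reCLMpi n (Pi.single j (1:ℂ)) = Pi.single j (1:ℝ) := by
  funext k
  simp [reCLMpi, Pi.single_apply, apply_ite Complex.re]

lemma reCLMpi_single_I (n : ℕ) (j : Fin n) :
    reCLMpi n (Pi.single j Complex.I) = 0 := by
  funext k
  simp [reCLMpi, Pi.single_apply, apply_ite Complex.re]

lemma hasFDerivAt_comp_re {n : ℕ} {h : (Fin n → ℝ) → ℝ} {z : Fin n → ℂ}
    (hh : DifferentiableAt ℝ h (rePart n z)) :
    HasFDerivAt (fun w => ((h (rePart n w) : ℝ) : ℂ))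
      (Complex.ofRealCLM.comp ((fderiv ℝ h (rePart n z)).comp (reCLMpi n))) z := by
  have h1 : HasFDerivAt (rePart n) (reCLMpi n) z := (reCLMpi n).hasFDerivAt
  exact Complex.ofRealCLM.hasFDerivAt.comp z (hh.hasFDerivAt.comp z h1)

lemma fderiv_comp_re {n : ℕ} {h : (Fin n → ℝ) → ℝ} {z : Fin n → ℂ}
    (hh : DifferentiableAt ℝ h (rePart n z)) :
    fderiv ℝ (fun w => ((h (rePart n w) : ℝ) : ℂ)) z
      = Complex.ofRealCLM.comp ((fderiv ℝ h (rePart n z)).comp (reCLMpi n)) :=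
  (hasFDerivAt_comp_re hh).fderiv

lemma wdz_comp_re {n : ℕ} (j : Fin n) {h : (Fin n → ℝ) → ℝ} {z : Fin n → ℂ}
    (hh : DifferentiableAt ℝ h (rePart n z)) :
    wdz n j (fun w => ((h (rePart n w) : ℝ) : ℂ)) z = (pd n j h (rePart n z) : ℂ) / 2 := by
  rw [wdz, fderiv_comp_re hh]
  simp [reCLMpi_single_one, reCLMpi_single_I, pd]
  ring

lemma wdzbar_comp_re {n : ℕ} (j : Fin n) {h : (Fin n → ℝ) → ℝ} {z : Fin n → ℂ}
    (hh : DifferentiableAt ℝ h (rePart n z)) :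
    wdzbar n j (fun w => ((h (rePart n w) : ℝ) : ℂ)) z = (pd n j h (rePart n z) : ℂ) / 2 := by
  rw [wdzbar, fderiv_comp_re hh]
  simp [reCLMpi_single_one, reCLMpi_single_I, pd]
  ring

lemma wdz_congr {n : ℕ} (j : Fin n) {f₁ f₂ : (Fin n → ℂ) → ℂ} {z : Fin n → ℂ}
    (h : f₁ =ᶠ[nhds z] f₂) : wdz n j f₁ z = wdz n j f₂ z := by
  rw [wdz, wdz, h.fderiv_eq]

lemma wdzbar_congr {n : ℕ} (j : Fin n) {f₁ f₂ : (Fin n → ℂ) → ℂ} {z : Fin n → ℂ}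
    (h : f₁ =ᶠ[nhds z] f₂) : wdzbar n j f₁ z = wdzbar n j f₂ z := by
  rw [wdzbar, wdzbar, h.fderiv_eq]

lemma contDiffOn_det' {n : ℕ} {M : (Fin n → ℝ) → Matrix (Fin n) (Fin n) ℝ}
    {s : Set (Fin n → ℝ)}
    (h : ∀ i j, ContDiffOn ℝ (⊤ : ℕ∞) (fun y => M y i j) s) :
    ContDiffOn ℝ (⊤ : ℕ∞) (fun y => (M y).det) s := by
  simp only [Matrix.det_apply']
  exact ContDiffOn.sum fun σ _ =>
    contDiffOn_const.mul (contDiffOn_prod fun i _ => h (σ i) i)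

/-- if `g(t)` solves the geometric flow `∂_t g_{ij} = ∂_i∂_j log det g` on
`U × [0,S]`, then `G̃_{ij}(z,t) := g_{ij}(Re z, t/4)` solves the Chern–Ricci flow
`∂_t G̃_{ij} = ∂²(log det G̃)/∂z^i∂z̄^j = -R_{ij̄}(G̃)` on `T_U × [0,4S]`, with initial
value `G̃_{ij}(z,0) = g_{ij}(Re z, 0)`. -/
theorem stmt11
    (n : ℕ) (hn : 1 ≤ n) (U : Set (Fin n → ℝ)) (hU : IsOpen U) (hUne : U.Nonempty)
    (S : ℝ) (hS : 0 < S)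
    (g : ℝ → (Fin n → ℝ) → Matrix (Fin n) (Fin n) ℝ)
    -- `g` is smooth (jointly in space and time) on `U × [0,S]`
    (hsmooth : ∀ i j : Fin n, ContDiffOn ℝ (⊤ : ℕ∞)
      (fun p : (Fin n → ℝ) × ℝ => g p.2 p.1 i j) (U ×ˢ Icc 0 S))
    (hpos : ∀ t ∈ Icc (0:ℝ) S, ∀ x ∈ U, (g t x).PosDef)
    -- `g` solves the geometric flow `∂_t g_{ij}(x,t) = ∂_i∂_j log det g(x,t)`
    (hflow : ∀ x ∈ U, ∀ t ∈ Icc (0:ℝ) S, ∀ i j : Fin n,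
      HasDerivWithinAt (fun s => g s x i j)
        (pd n i (pd n j (fun y => Real.log (g t y).det)) x) (Icc 0 S) t)
    -- `G̃_{ij}(z,t) := g_{ij}(Re z, t/4)`
    (Gt : ℝ → (Fin n → ℂ) → Matrix (Fin n) (Fin n) ℂ)
    (hGt : ∀ t w, Gt t w = Matrix.of (fun i j : Fin n => ((g (t/4) (rePart n w) i j : ℝ) : ℂ)))
    -- Chern–Ricci curvature `R_{ij̄}(G̃) = -∂²(log det G̃)/∂z^i∂z̄^j`
    (R : ℝ → (Fin n → ℂ) → Fin n → Fin n → ℂ)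
    (hR : ∀ t z i j, R t z i j =
      -(wdz n i (fun w => wdzbar n j (fun w' => Complex.log (Gt t w').det) w) z)) :
    -- `G̃` solves the Chern–Ricci flow `∂_t G̃_{ij} = ∂²(log det G̃)/∂z^i∂z̄^j = -R_{ij̄}(G̃)`...
    (∀ z : Fin n → ℂ, rePart n z ∈ U → ∀ t ∈ Icc (0:ℝ) (4*S), ∀ i j : Fin n,
      HasDerivWithinAt (fun s => Gt s z i j)
        (wdz n i (fun w => wdzbar n j (fun w' => Complex.log (Gt t w').det) w) z)
        (Icc 0 (4*S)) t
      ∧ wdz n i (fun w => wdzbar n j (fun w' => Complex.log (Gt t w').det) w) z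
          = -(R t z i j))
    ∧
    -- ...with initial value `G̃_{ij}(z,0) = g_{ij}(Re z, 0)`
    (∀ z : Fin n → ℂ, rePart n z ∈ U → ∀ i j : Fin n,
      Gt 0 z i j = ((g 0 (rePart n z) i j : ℝ) : ℂ)) := by

  constructor
  · intro z hx t ht i j
    set x := rePart n z with hxdef
    have hτ : t / 4 ∈ Icc (0:ℝ) S := by
      constructor
      · linarith [ht.1]
      · linarith [ht.2]
    -- the spatial slice at time t/4 is smooth on U
    have hsl : ∀ a b : Fin n, ContDiffOn ℝ (⊤ : ℕ∞) (fun y => g (t/4) y a b) U := by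
      intro a b
      have hmap : ContDiffOn ℝ (⊤ : ℕ∞) (fun y : Fin n → ℝ => (y, t/4)) U :=
        (contDiff_id.prodMk contDiff_const).contDiffOn
      exact (hsmooth a b).comp hmap (fun y hy => ⟨hy, hτ⟩)
    set F : (Fin n → ℝ) → ℝ := fun y => Real.log (g (t/4) y).det with hFdef
    have hdetsm : ContDiffOn ℝ (⊤ : ℕ∞) (fun y => (g (t/4) y).det) U := contDiffOn_det' hsl
    have hdetpos : ∀ y ∈ U, 0 < (g (t/4) y).det := fun y hy =>
      (hpos (t/4) hτ y hy).det_pos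
    have hFsm : ContDiffOn ℝ (⊤ : ℕ∞) F U :=
      hdetsm.log (fun y hy => (hdetpos y hy).ne')
    -- tube domain is open
    have hrecont : Continuous (rePart n) := (reCLMpi n).continuous
    have hT : IsOpen {w : Fin n → ℂ | rePart n w ∈ U} := hU.preimage hrecont
    -- log det Gt = F ∘ rePart on the tube
    have hlogdet : ∀ w : Fin n → ℂ, rePart n w ∈ U →
        Complex.log (Gt t w).det = ((F (rePart n w) : ℝ) : ℂ) := by
      intro w hw
      have h1 : Gt t w = Complex.ofRealHom.mapMatrix (g (t/4) (rePart n w)) := by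
        rw [hGt]; rfl
      rw [h1, ← RingHom.map_det]
      exact (Complex.ofReal_log (hdetpos _ hw).le).symm
    -- the inner Wirtinger derivative on the tube
    have hFdiff : ∀ y ∈ U, DifferentiableAt ℝ F y := by
      intro y hy
      exact ((hFsm y hy).contDiffAt (hU.mem_nhds hy)).differentiableAt (by simp)
    have hinner : ∀ w : Fin n → ℂ, rePart n w ∈ U →
        wdzbar n j (fun w' => Complex.log (Gt t w').det) w
          = ((pd n j F (rePart n w) : ℝ) : ℂ) / 2 := by
      intro w hw
      have hev : (fun w' => Complex.log (Gt t w').det)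
          =ᶠ[nhds w] (fun w' => ((F (rePart n w') : ℝ) : ℂ)) := by
        filter_upwards [hT.mem_nhds hw] with w' hw' using hlogdet w' hw'
      rw [wdzbar_congr j hev]
      exact wdzbar_comp_re j (hFdiff _ hw)
    -- K := ∂_j F is smooth enough
    set K : (Fin n → ℝ) → ℝ := pd n j F with hKdef
    have hKdiff : DifferentiableAt ℝ K x := by
      have h1 : ContDiffAt ℝ (⊤ : ℕ∞) F x := (hFsm x hx).contDiffAt (hU.mem_nhds hx)
      have h2 : ContDiffAt ℝ (⊤ : ℕ∞) (fderiv ℝ F) x := by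
        apply h1.fderiv_right
        simp
      have h3 : ContDiffAt ℝ (⊤ : ℕ∞) K x := by
        have := h2.clm_apply (contDiffAt_const (c := Pi.single j (1:ℝ)))
        exact this
      exact h3.differentiableAt (by simp)
    set H : (Fin n → ℝ) → ℝ := fun y => (2:ℝ)⁻¹ * K y with hHdef
    have hHdiff : DifferentiableAt ℝ H x := by
      rw [hHdef]; exact hKdiff.const_mul ((2:ℝ)⁻¹)
    have hpdH : pd n i H x = (2:ℝ)⁻¹ * pd n i K x := by
      rw [pd, pd]
      have hfd : fderiv ℝ H x = (2:ℝ)⁻¹ • fderiv ℝ K x := by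
        rw [hHdef]; exact fderiv_const_mul hKdiff ((2:ℝ)⁻¹)
      rw [hfd]
      simp
    -- the outer Wirtinger derivative
    have houter : wdz n i (fun w => wdzbar n j (fun w' => Complex.log (Gt t w').det) w) z
        = ((pd n i (pd n j F) x : ℝ) : ℂ) / 4 := by
      have hev : (fun w => wdzbar n j (fun w' => Complex.log (Gt t w').det) w)
          =ᶠ[nhds z] (fun w => ((H (rePart n w) : ℝ) : ℂ)) := by
        filter_upwards [hT.mem_nhds hx] with w hw
        rw [hinner w hw]
        simp [hHdef, div_eq_mul_inv]
        push_cast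
        ring
      rw [wdz_congr i hev, wdz_comp_re i hHdiff, ← hxdef, hpdH]
      push_cast
      ring
    refine ⟨?_, ?_⟩
    · -- time derivative
      have hder : HasDerivWithinAt (fun s => g s x i j)
          (pd n i (pd n j F) x) (Icc 0 S) (t/4) := hflow x hx (t/4) hτ i j
      have h4 : HasDerivWithinAt (fun s : ℝ => s / 4) (1/4) (Icc 0 (4*S)) t := by
        simpa using ((hasDerivAt_id t).div_const 4).hasDerivWithinAt (s := Icc 0 (4*S))
      have hmaps : MapsTo (fun s : ℝ => s / 4) (Icc 0 (4*S)) (Icc 0 S) := by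
        intro s hs
        constructor
        · linarith [hs.1]
        · linarith [hs.2]
      have hcomp : HasDerivWithinAt (fun s => g (s/4) x i j)
          (pd n i (pd n j F) x * (1/4)) (Icc 0 (4*S)) t :=
        by have := HasDerivWithinAt.comp t hder h4 hmaps; exact this
      have hcomp2 : HasDerivWithinAt (fun s => ((g (s/4) x i j : ℝ) : ℂ))
          ((pd n i (pd n j F) x * (1/4) : ℝ) : ℂ) (Icc 0 (4*S)) t := by
        have := Complex.ofRealCLM.hasFDerivAt.comp_hasDerivWithinAt t hcomp
        simpa [Function.comp_def] using this
      have hfun : (fun s => Gt s z i j) = fun s => ((g (s/4) x i j : ℝ) : ℂ) := by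
        funext s
        rw [hGt]
        rfl
      rw [hfun, houter]
      convert hcomp2 using 1
      push_cast
      ring
    · rw [hR]
      ring
  · intro z hz i j
    rw [hGt]
    norm_num
end

section
/- Let U ⊆ ℝⁿ be a nonempty open convex set, φ₀ : U → ℝ smooth with positive-definite Hessian, and let g : U × [0,T] → (symmetric positive-definite n×n real matrices) be a smooth solution of the geometric flow ∂_t g_{ij}(x,t) = ∂_i∂_j log det g(x,t) with g_{ij}(·,0) = ∂_i∂_j φ₀. Then the evolved metrics remain Hessian: for every t ∈ [0,T] there is a smooth function ψ_t : U → ℝ with g_{ij}(x,t) = ∂_i∂_j ψ_t(x) for all x ∈ U and all i,j; explicitly, one may take ψ_t(x) = φ₀(x) + t · log det(D²φ₀)(x) + ∫₀ᵗ log( det g(x,s) / det D²φ₀(x) ) ds. -/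
open Set Matrix

section Aux

open intervalIntegral MeasureTheory
open scoped Interval

variable {H : Type} [NormedAddCommGroup H] [NormedSpace ℝ H]

/-- Partial derivative in the first variable of a jointly smooth function, as composition with
the inclusion. -/
theorem aux_pderiv {E' : Type*} [NormedAddCommGroup E'] [NormedSpace ℝ E']
    {U : Set H} (hU : IsOpen U) {T : ℝ}
    {G : H → ℝ → E'}
    (hG : ContDiffOn ℝ (⊤ : ℕ∞) (fun p : H × ℝ => G p.1 p.2) (U ×ˢ Icc 0 T))
    {x : H} (hx : x ∈ U) {s : ℝ} (hs : s ∈ Icc (0:ℝ) T) :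
    HasFDerivAt (fun y => G y s)
      ((fderivWithin ℝ (fun p : H × ℝ => G p.1 p.2) (U ×ˢ Icc 0 T) (x, s)).comp
        (ContinuousLinearMap.inl ℝ H ℝ)) x := by
  have hd : DifferentiableWithinAt ℝ (fun p : H × ℝ => G p.1 p.2) (U ×ˢ Icc 0 T) (x, s) := by
    apply (hG.differentiableOn ?_) (x, s) ⟨hx, hs⟩
    simp
  have h1 := hd.hasFDerivWithinAt
  have h2 : HasFDerivWithinAt (fun y : H => (y, s)) (ContinuousLinearMap.inl ℝ H ℝ) U x :=
    (hasFDerivAt_prodMk_left x s).hasFDerivWithinAt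
  have h3 := h1.comp x h2 (fun y (hy : y ∈ U) => show (y, s) ∈ U ×ˢ Icc (0:ℝ) T from ⟨hy, hs⟩)
  exact h3.hasFDerivAt (hU.mem_nhds hx)

/-- The partial-derivative map of a jointly smooth function is jointly smooth. -/
theorem aux_pderiv_smooth {E' : Type*} [NormedAddCommGroup E'] [NormedSpace ℝ E']
    {U : Set H} (hU : IsOpen U) {T : ℝ} (hT : 0 < T)
    {G : H → ℝ → E'}
    (hG : ContDiffOn ℝ (⊤ : ℕ∞) (fun p : H × ℝ => G p.1 p.2) (U ×ˢ Icc 0 T)) :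
    ContDiffOn ℝ (⊤ : ℕ∞) (fun p : H × ℝ =>
      (fderivWithin ℝ (fun q : H × ℝ => G q.1 q.2) (U ×ˢ Icc 0 T) (p.1, p.2)).comp
        (ContinuousLinearMap.inl ℝ H ℝ)) (U ×ˢ Icc 0 T) := by
  have hud : UniqueDiffOn ℝ (U ×ˢ Icc (0:ℝ) T) := hU.uniqueDiffOn.prod (uniqueDiffOn_Icc hT)
  have h1 : ContDiffOn ℝ (⊤ : ℕ∞)
      (fderivWithin ℝ (fun q : H × ℝ => G q.1 q.2) (U ×ˢ Icc 0 T)) (U ×ˢ Icc 0 T) :=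
    hG.fderivWithin hud (le_of_eq rfl)
  exact h1.clm_comp contDiffOn_const

/-- Continuity in the time variable gives interval integrability. -/
theorem aux_intg {E' : Type*} [NormedAddCommGroup E'] [NormedSpace ℝ E']
    {U : Set H} {T t : ℝ} (ht : t ∈ Icc (0:ℝ) T)
    {G : H → ℝ → E'} (hGc : ContinuousOn (fun p : H × ℝ => G p.1 p.2) (U ×ˢ Icc 0 T))
    {y : H} (hy : y ∈ U) : IntervalIntegrable (fun s => G y s) volume 0 t := by
  apply ContinuousOn.intervalIntegrable
  rw [uIcc_of_le ht.1]
  exact hGc.comp ((continuous_const.prodMk continuous_id).continuousOn)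
    (fun s hs => ⟨hy, Icc_subset_Icc le_rfl ht.2 hs⟩)

set_option maxHeartbeats 1000000 in
set_option synthInstance.maxHeartbeats 400000 in
/-- Differentiation under the interval integral sign. -/
theorem aux_int_hasFDerivAt [ProperSpace H] {E' : Type*} [NormedAddCommGroup E'] [NormedSpace ℝ E']
    [CompleteSpace E']
    {U : Set H} (hU : IsOpen U) {T t : ℝ} (ht : t ∈ Icc (0:ℝ) T)
    {G : H → ℝ → E'} {G' : H → ℝ → H →L[ℝ] E'}
    (hGc : ContinuousOn (fun p : H × ℝ => G p.1 p.2) (U ×ˢ Icc 0 T))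
    (hG'c : ContinuousOn (fun p : H × ℝ => G' p.1 p.2) (U ×ˢ Icc 0 T))
    (hder : ∀ y ∈ U, ∀ s ∈ Icc (0:ℝ) T, HasFDerivAt (fun z => G z s) (G' y s) y)
    {x : H} (hx : x ∈ U) :
    HasFDerivAt (fun y => ∫ s in (0:ℝ)..t, G y s) (∫ s in (0:ℝ)..t, G' x s) x := by
  obtain ⟨ε, hε, hsub⟩ : ∃ ε > 0, Metric.closedBall x ε ⊆ U :=
    (Metric.nhds_basis_closedBall.mem_iff).1 (hU.mem_nhds hx)
  have hΙ : Ι (0:ℝ) t ⊆ Icc 0 T := by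
    rw [uIoc_of_le ht.1]
    exact (Ioc_subset_Icc_self).trans (Icc_subset_Icc le_rfl ht.2)
  have hK : IsCompact (Metric.closedBall x ε ×ˢ Icc (0:ℝ) T) :=
    (isCompact_closedBall x ε).prod isCompact_Icc
  obtain ⟨C, hC⟩ := hK.exists_bound_of_continuousOn
    (hG'c.mono (prod_mono hsub Subset.rfl))
  have hmeas : ∀ y ∈ U, AEStronglyMeasurable (fun s => G y s) (volume.restrict (Ι (0:ℝ) t)) := by
    intro y hy
    refine ContinuousOn.aestronglyMeasurable ?_ measurableSet_uIoc
    exact (hGc.comp ((continuous_const.prodMk continuous_id).continuousOn)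
      (fun s hs => ⟨hy, hΙ hs⟩))
  refine intervalIntegral.hasFDerivAt_integral_of_dominated_of_fderiv_le
    (bound := fun _ => C) (Metric.ball_mem_nhds x hε) ?_ ?_ ?_ ?_ ?_ ?_
  · exact Filter.eventually_of_mem (hU.mem_nhds hx) (fun y hy => hmeas y hy)
  · exact aux_intg ht hGc hx
  · refine ContinuousOn.aestronglyMeasurable ?_ measurableSet_uIoc
    exact (hG'c.comp ((continuous_const.prodMk continuous_id).continuousOn)
      (fun s hs => ⟨hx, hΙ hs⟩))
  · refine Filter.Eventually.of_forall (fun s hs y hy => ?_)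
    exact hC (y, s) ⟨Metric.ball_subset_closedBall hy, hΙ hs⟩
  · exact intervalIntegrable_const
  · refine Filter.Eventually.of_forall (fun s hs y hy => ?_)
    exact hder y (hsub (Metric.ball_subset_closedBall hy)) s (hΙ hs)

set_option maxHeartbeats 1000000 in
set_option synthInstance.maxHeartbeats 400000 in
/-- A parametric interval integral of a jointly smooth integrand is `C^k` for every `k`. -/
theorem aux_int_contDiffOn [ProperSpace H]
    {U : Set H} (hU : IsOpen U) {T : ℝ} (hT : 0 < T) {t : ℝ} (ht : t ∈ Icc (0:ℝ) T) (k : ℕ) :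
    ∀ (E' : Type) (_ : NormedAddCommGroup E'), ∀ (_ : NormedSpace ℝ E') (_ : CompleteSpace E')
      (G : H → ℝ → E'),
      ContDiffOn ℝ (⊤ : ℕ∞) (fun p : H × ℝ => G p.1 p.2) (U ×ˢ Icc 0 T) →
      ContDiffOn ℝ (k : ℕ) (fun x => ∫ s in (0:ℝ)..t, G x s) U := by
  induction k with
  | zero =>
    intro E' _ _ _ G hG
    simp only [Nat.cast_zero, contDiffOn_zero]
    intro x hx
    have h := aux_int_hasFDerivAt hU ht hG.continuousOn
      (aux_pderiv_smooth hU hT hG).continuousOn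
      (fun y hy s hs => aux_pderiv hU hG hy hs) hx
    exact h.differentiableAt.continuousAt.continuousWithinAt
  | succ k ih =>
    intro E' _ _ _ G hG
    set G' : H → ℝ → H →L[ℝ] E' := fun y s =>
      (fderivWithin ℝ (fun q : H × ℝ => G q.1 q.2) (U ×ˢ Icc 0 T) (y, s)).comp
        (ContinuousLinearMap.inl ℝ H ℝ) with hG'def
    have hG' : ContDiffOn ℝ (⊤ : ℕ∞) (fun p : H × ℝ => G' p.1 p.2) (U ×ˢ Icc 0 T) :=
      aux_pderiv_smooth hU hT hG
    have hder : ∀ y ∈ U, ∀ s ∈ Icc (0:ℝ) T, HasFDerivAt (fun z => G z s) (G' y s) y :=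
      fun y hy s hs => aux_pderiv hU hG hy hs
    have hInt : ∀ y ∈ U,
        HasFDerivAt (fun z => ∫ s in (0:ℝ)..t, G z s) (∫ s in (0:ℝ)..t, G' y s) y :=
      fun y hy => aux_int_hasFDerivAt hU ht hG.continuousOn hG'.continuousOn hder hy
    have hcast : ((k+1 : ℕ) : WithTop ℕ∞) = (k : ℕ) + 1 := by norm_cast
    rw [hcast, contDiffOn_succ_iff_fderiv_of_isOpen hU]
    refine ⟨fun y hy => (hInt y hy).differentiableAt.differentiableWithinAt, ?_, ?_⟩
    · intro h
      simp at h
    · exact (ih (H →L[ℝ] E') inferInstance inferInstance inferInstance G' hG').congr fun y hy => (hInt y hy).fderiv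

end Aux

open intervalIntegral MeasureTheory

set_option maxHeartbeats 4000000 in
set_option synthInstance.maxHeartbeats 1000000 in
/-- along the geometric flow `∂_t g_{ij} = ∂_i∂_j log det g` starting from a
Hessian metric `g(·,0) = D²φ₀` on an open convex set, the evolved metrics remain Hessian:
for each `t`, the explicit potential
`ψ_t(x) = φ₀(x) + t log det D²φ₀(x) + ∫₀ᵗ log (det g(x,s) / det D²φ₀(x)) ds`
is smooth and satisfies `g_{ij}(x,t) = ∂_i∂_j ψ_t(x)`. -/
theorem stmt12
    (n : ℕ) (hn : 1 ≤ n) (U : Set (Fin n → ℝ)) (hU : IsOpen U) (hUconv : Convex ℝ U)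
    (hUne : U.Nonempty)
    (T : ℝ) (hT : 0 < T)
    -- `φ₀` smooth with positive-definite Hessian on `U`
    (φ₀ : (Fin n → ℝ) → ℝ)
    (hφ₀ : ContDiffOn ℝ (⊤ : ℕ∞) φ₀ U)
    (hφ₀pos : ∀ x ∈ U, (Matrix.of (fun i j : Fin n => pd n i (pd n j φ₀) x)).PosDef)
    -- `g` a smooth solution of the geometric flow on `U × [0,T]`
    (g : ℝ → (Fin n → ℝ) → Matrix (Fin n) (Fin n) ℝ)
    (hsmooth : ∀ i j : Fin n, ContDiffOn ℝ (⊤ : ℕ∞)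
      (fun p : (Fin n → ℝ) × ℝ => g p.2 p.1 i j) (U ×ˢ Icc 0 T))
    (hpos : ∀ t ∈ Icc (0:ℝ) T, ∀ x ∈ U, (g t x).PosDef)
    (hflow : ∀ x ∈ U, ∀ t ∈ Icc (0:ℝ) T, ∀ i j : Fin n,
      HasDerivWithinAt (fun s => g s x i j)
        (pd n i (pd n j (fun y => Real.log (g t y).det)) x) (Icc 0 T) t)
    -- initial value `g_{ij}(·,0) = ∂_i∂_j φ₀`
    (hinit : ∀ x ∈ U, ∀ i j : Fin n, g 0 x i j = pd n i (pd n j φ₀) x)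
    -- the explicit potential `ψ_t`
    (ψ : ℝ → (Fin n → ℝ) → ℝ)
    (hψ : ∀ t x, ψ t x = φ₀ x
      + t * Real.log (Matrix.of (fun i j : Fin n => pd n i (pd n j φ₀) x)).det
      + ∫ s in (0:ℝ)..t, Real.log ((g s x).det
          / (Matrix.of (fun i j : Fin n => pd n i (pd n j φ₀) x)).det)) :
    -- the evolved metrics remain Hessian, with potential `ψ_t`
    ∀ t ∈ Icc (0:ℝ) T,
      ContDiffOn ℝ (⊤ : ℕ∞) (ψ t) U ∧
      ∀ x ∈ U, ∀ i j : Fin n, g t x i j = pd n i (pd n j (ψ t)) x := by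
  classical
  set S : Set ((Fin n → ℝ) × ℝ) := U ×ˢ Icc 0 T with hSdef
  set F : (Fin n → ℝ) → ℝ → ℝ := fun y s => Real.log ((g s y).det) with hFdef
  -- joint smoothness of `log det g`
  have hdet : ContDiffOn ℝ (⊤ : ℕ∞) (fun p : (Fin n → ℝ) × ℝ => (g p.2 p.1).det) S := by
    have hrw : (fun p : (Fin n → ℝ) × ℝ => (g p.2 p.1).det)
        = fun p : (Fin n → ℝ) × ℝ => ∑ σ : Equiv.Perm (Fin n),
            ((Equiv.Perm.sign σ : ℤ) : ℝ) * ∏ i, g p.2 p.1 (σ i) i := by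
      funext p
      rw [Matrix.det_apply']
    rw [hrw]
    exact ContDiffOn.sum fun σ _ =>
      contDiffOn_const.mul (contDiffOn_prod fun i _ => hsmooth (σ i) i)
  have hFsmooth : ContDiffOn ℝ (⊤ : ℕ∞) (fun p : (Fin n → ℝ) × ℝ => F p.1 p.2) S :=
    hdet.log fun p hp => ((hpos p.2 hp.2 p.1 hp.1).det_pos).ne'
  -- the constant (in time) determinant of the Hessian of φ₀
  set c : (Fin n → ℝ) → ℝ := fun y => (Matrix.of (fun i j : Fin n => pd n i (pd n j φ₀) y)).det with hcdef
  have hcpos : ∀ y ∈ U, 0 < c y := fun y hy => (hφ₀pos y hy).det_pos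
  -- key pointwise identity for ψ
  have hkey : ∀ t ∈ Icc (0:ℝ) T, ∀ y ∈ U,
      ψ t y = φ₀ y + ∫ s in (0:ℝ)..t, F y s := by
    intro t ht y hy
    have hFint : IntervalIntegrable (fun s => F y s) volume 0 t :=
      aux_intg ht hFsmooth.continuousOn hy
    have hcong : EqOn (fun s => Real.log ((g s y).det / c y))
        (fun s => F y s - Real.log (c y)) (uIcc 0 t) := by
      intro s hs
      rw [uIcc_of_le ht.1] at hs
      have hsT : s ∈ Icc (0:ℝ) T := Icc_subset_Icc le_rfl ht.2 hs
      exact Real.log_div ((hpos s hsT y hy).det_pos).ne' (hcpos y hy).ne'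
    rw [hψ]
    rw [intervalIntegral.integral_congr hcong,
      intervalIntegral.integral_sub hFint intervalIntegrable_const,
      intervalIntegral.integral_const]
    simp only [smul_eq_mul, sub_zero]
    ring
  intro t ht
  -- smoothness of ψ t
  have hΦsmooth : ContDiffOn ℝ (⊤ : ℕ∞) (fun y => ∫ s in (0:ℝ)..t, F y s) U := by
    rw [show (((⊤ : ℕ∞)) : WithTop ℕ∞) = ((⊤ : ℕ∞) : WithTop ℕ∞) from rfl, contDiffOn_infty]
    intro k
    exact aux_int_contDiffOn hU hT ht k ℝ inferInstance inferInstance inferInstance F hFsmooth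
  refine ⟨(hφ₀.add hΦsmooth).congr (fun y hy => hkey t ht y hy), ?_⟩
  intro x hx i j
  -- derivative machinery
  set D1 : (Fin n → ℝ) → ℝ → (Fin n → ℝ) →L[ℝ] ℝ := fun y s =>
    (fderivWithin ℝ (fun q : (Fin n → ℝ) × ℝ => F q.1 q.2) S (y, s)).comp
      (ContinuousLinearMap.inl ℝ (Fin n → ℝ) ℝ) with hD1def
  have hD1smooth : ContDiffOn ℝ (⊤ : ℕ∞) (fun p : (Fin n → ℝ) × ℝ => D1 p.1 p.2) S :=
    aux_pderiv_smooth hU hT hFsmooth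
  have hD1der : ∀ y ∈ U, ∀ s ∈ Icc (0:ℝ) T, HasFDerivAt (fun z => F z s) (D1 y s) y :=
    fun y hy s hs => aux_pderiv hU hFsmooth hy hs
  set D2 : (Fin n → ℝ) → ℝ → (Fin n → ℝ) →L[ℝ] ((Fin n → ℝ) →L[ℝ] ℝ) := fun y s =>
    (fderivWithin ℝ (fun q : (Fin n → ℝ) × ℝ => D1 q.1 q.2) S (y, s)).comp
      (ContinuousLinearMap.inl ℝ (Fin n → ℝ) ℝ) with hD2def
  have hD2smooth : ContDiffOn ℝ (⊤ : ℕ∞) (fun p : (Fin n → ℝ) × ℝ => D2 p.1 p.2) S :=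
    aux_pderiv_smooth hU hT hD1smooth
  have hD2der : ∀ y ∈ U, ∀ s ∈ Icc (0:ℝ) T, HasFDerivAt (fun z => D1 z s) (D2 y s) y :=
    fun y hy s hs => aux_pderiv hU hD1smooth hy hs
  set ev : ((Fin n → ℝ) →L[ℝ] ℝ) →L[ℝ] ℝ := ContinuousLinearMap.apply ℝ ℝ (Pi.single j 1) with hevdef
  set Gj : (Fin n → ℝ) → ℝ → ℝ := fun y s => ev (D1 y s) with hGjdef
  set Gj' : (Fin n → ℝ) → ℝ → (Fin n → ℝ) →L[ℝ] ℝ := fun y s => ev.comp (D2 y s) with hGj'def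
  have hGjsmooth : ContDiffOn ℝ (⊤ : ℕ∞) (fun p : (Fin n → ℝ) × ℝ => Gj p.1 p.2) S :=
    ev.contDiff.comp_contDiffOn hD1smooth
  have hGj'smooth : ContDiffOn ℝ (⊤ : ℕ∞) (fun p : (Fin n → ℝ) × ℝ => Gj' p.1 p.2) S :=
    contDiffOn_const.clm_comp hD2smooth
  have hGjder : ∀ y ∈ U, ∀ s ∈ Icc (0:ℝ) T, HasFDerivAt (fun z => Gj z s) (Gj' y s) y :=
    fun y hy s hs => ev.hasFDerivAt.comp y (hD2der y hy s hs)
  -- Step A: first partial derivative of ψ t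
  have stepA : ∀ y ∈ U, pd n j (ψ t) y = pd n j φ₀ y + ∫ s in (0:ℝ)..t, Gj y s := by
    intro y hy
    have hΦder : HasFDerivAt (fun z => ∫ s in (0:ℝ)..t, F z s) (∫ s in (0:ℝ)..t, D1 y s) y :=
      aux_int_hasFDerivAt hU ht hFsmooth.continuousOn hD1smooth.continuousOn hD1der hy
    have hφder : HasFDerivAt φ₀ (fderiv ℝ φ₀ y) y := by
      refine DifferentiableAt.hasFDerivAt ?_
      have := (hφ₀.differentiableOn (by simp)) y hy
      exact this.differentiableAt (hU.mem_nhds hy)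
    have hsum := hφder.add hΦder
    have heq : ψ t =ᶠ[nhds y] fun z => φ₀ z + ∫ s in (0:ℝ)..t, F z s :=
      Filter.eventuallyEq_of_mem (hU.mem_nhds hy) (fun z hz => hkey t ht z hz)
    show fderiv ℝ (ψ t) y (Pi.single j 1) = _
    rw [heq.fderiv_eq, (show HasFDerivAt (fun z => φ₀ z + ∫ s in (0:ℝ)..t, F z s) _ y from hsum).fderiv, ContinuousLinearMap.add_apply,
      ContinuousLinearMap.intervalIntegral_apply
        (aux_intg ht hD1smooth.continuousOn hy) (Pi.single j 1)]
    rfl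
  -- Step C: identification of the flow's right-hand side
  have stepC : ∀ s ∈ Icc (0:ℝ) T,
      pd n i (pd n j (fun y => Real.log (g s y).det)) x = Gj' x s (Pi.single i 1) := by
    intro s hs
    have hstep1 : ∀ y ∈ U, pd n j (fun z => Real.log (g s z).det) y = Gj y s := by
      intro y hy
      show fderiv ℝ (fun z => F z s) y (Pi.single j 1) = ev (D1 y s)
      rw [(hD1der y hy s hs).fderiv]
      rfl
    have heq : (fun y => pd n j (fun z => Real.log (g s z).det) y)
        =ᶠ[nhds x] fun y => Gj y s :=
      Filter.eventuallyEq_of_mem (hU.mem_nhds hx) (fun y hy => hstep1 y hy)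
    show fderiv ℝ (fun y => pd n j (fun z => Real.log (g s z).det) y) x (Pi.single i 1) = _
    rw [heq.fderiv_eq, (hGjder x hx s hs).fderiv]
  -- Step D: fundamental theorem of calculus along the flow
  have hsubt : Icc (0:ℝ) t ⊆ Icc 0 T := Icc_subset_Icc le_rfl ht.2
  have hcont_g : ContinuousOn (fun s => g s x i j) (Icc 0 t) := by
    intro s hs
    exact ((hflow x hx s (hsubt hs) i j).continuousWithinAt).mono hsubt
  have hderiv_g : ∀ s ∈ Ioo (0:ℝ) t, HasDerivWithinAt (fun s' => g s' x i j)
      (Gj' x s (Pi.single i 1)) (Ioi s) s := by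
    intro s hs
    have hsT : s ∈ Icc (0:ℝ) T := ⟨hs.1.le, (hs.2.trans_le ht.2).le⟩
    have h0 := hflow x hx s hsT i j
    have h1 : HasDerivAt (fun s' => g s' x i j)
        (pd n i (pd n j (fun y => Real.log (g s y).det)) x) s :=
      h0.hasDerivAt (Icc_mem_nhds hs.1 (hs.2.trans_le ht.2))
    rw [stepC s hsT] at h1
    exact h1.hasDerivWithinAt
  have hint' : IntervalIntegrable (fun s => Gj' x s (Pi.single i 1)) volume 0 t := by
    have hcont : ContinuousOn (fun s => Gj' x s) (uIcc 0 t) := by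
      rw [uIcc_of_le ht.1]
      exact hGj'smooth.continuousOn.comp
        ((continuous_const.prodMk continuous_id).continuousOn)
        (fun s hs => ⟨hx, hsubt hs⟩)
    exact ((ContinuousLinearMap.apply ℝ ℝ (Pi.single i 1)).continuous.comp_continuousOn
      hcont).intervalIntegrable
  have hFTC : (∫ s in (0:ℝ)..t, Gj' x s (Pi.single i 1))
      = g t x i j - g 0 x i j :=
    intervalIntegral.integral_eq_sub_of_hasDeriv_right_of_le ht.1 hcont_g hderiv_g hint'
  -- Step B: second partial derivative of ψ t
  have hpdφsmooth : ContDiffOn ℝ (⊤ : ℕ∞) (fun y => pd n j φ₀ y) U := by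
    have h1 : ContDiffOn ℝ (⊤ : ℕ∞) (fun y => fderiv ℝ φ₀ y) U :=
      hφ₀.fderiv_of_isOpen hU (le_of_eq rfl)
    exact ev.contDiff.comp_contDiffOn h1
  have hB : HasFDerivAt (fun y => pd n j φ₀ y)
      (fderiv ℝ (fun y => pd n j φ₀ y) x) x := by
    refine DifferentiableAt.hasFDerivAt ?_
    have := (hpdφsmooth.differentiableOn (by simp)) x hx
    exact this.differentiableAt (hU.mem_nhds hx)
  have hIder : HasFDerivAt (fun z => ∫ s in (0:ℝ)..t, Gj z s) (∫ s in (0:ℝ)..t, Gj' x s) x :=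
    aux_int_hasFDerivAt hU ht hGjsmooth.continuousOn hGj'smooth.continuousOn hGjder hx
  have hsum2 := hB.add hIder
  have heq2 : (fun y => pd n j (ψ t) y)
      =ᶠ[nhds x] fun y => pd n j φ₀ y + ∫ s in (0:ℝ)..t, Gj y s :=
    Filter.eventuallyEq_of_mem (hU.mem_nhds hx) (fun y hy => stepA y hy)
  have stepB : pd n i (pd n j (ψ t)) x
      = pd n i (pd n j φ₀) x + ∫ s in (0:ℝ)..t, Gj' x s (Pi.single i 1) := by
    show fderiv ℝ (fun y => pd n j (ψ t) y) x (Pi.single i 1) = _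
    rw [heq2.fderiv_eq, (show HasFDerivAt (fun y => pd n j φ₀ y + ∫ s in (0:ℝ)..t, Gj y s) _ x from hsum2).fderiv, ContinuousLinearMap.add_apply,
      ContinuousLinearMap.intervalIntegral_apply
        (aux_intg ht hGj'smooth.continuousOn hx) (Pi.single i 1)]
    rfl
  rw [stepB, hFTC, hinit x hx i j]
  ring
end
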